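/- arXiv:0909.1273 — 5 statements merged into one kernel-verified Lean document; each statement's English description precedes it below -/
import Mathlib

section
/- For every n ≥ 0, a rational number ξ ∈ (0,1) belongs to the Stern–Brocot sequence ℱ_n if and only if S(ξ) ≤ n+1, where S(ξ) is the sum of the partial quotients in the regular continued fraction expansion ξ = [0; a_1, …, a_m] with a_m ≥ 2. -/
open Set Filter

/-- The mediant of two rationals (written in lowest terms). -/
def mediant (x y : ℚ) : ℚ :=
  ((x.num + y.num : ℤ) : ℚ) / ((x.den + y.den : ℕ) : ℚ)

/-- `x` and `y` are consecutive elements of the set `S`. -/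
def IsConsecutive (S : Set ℚ) (x y : ℚ) : Prop :=
  x ∈ S ∧ y ∈ S ∧ x < y ∧ ∀ z ∈ S, ¬ (x < z ∧ z < y)

/-- The Stern–Brocot sequences `ℱ_n`. -/
def sternBrocot : ℕ → Set ℚ
  | 0 => {0, 1}
  | n + 1 => sternBrocot n ∪
      {z | ∃ x y : ℚ, IsConsecutive (sternBrocot n) x y ∧ z = mediant x y}

/-- `Q_n`, the set of mediants newly inserted at step `n ≥ 1` of the
Stern–Brocot construction. -/
def newMediants (n : ℕ) : Set ℚ :=
  {z | ∃ x y : ℚ, IsConsecutive (sternBrocot (n - 1)) x y ∧ z = mediant x y}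

/-- Value of the regular continued fraction `[0; a_1, …, a_m]`. -/
def cfVal : List ℕ → ℚ
  | [] => 0
  | a :: t => 1 / ((a : ℚ) + cfVal t)

/-- `a` is the regular continued fraction expansion `[0; a_1, …, a_m]` of `x`,
with all partial quotients positive and the last one at least `2`. -/
def IsCF (x : ℚ) (a : List ℕ) : Prop :=
  (∀ ai ∈ a, 1 ≤ ai) ∧ 2 ≤ a.getLastD 0 ∧ x = cfVal a

/-- Value of `b_1 - 1/(b_2 - ⋯ - 1/b_l)` (using the convention `1/0 = 0`,
so that `rrTail [b] = b`). -/
def rrTail : List ℕ → ℚ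
  | [] => 0
  | b :: t => (b : ℚ) - 1 / rrTail t

/-- Value of the regular reduced continued fraction
`[[1; b_1, …, b_l]] = 1 - 1/(b_1 - 1/(b_2 - ⋯ - 1/b_l))`. -/
def rrcfVal (b : List ℕ) : ℚ := 1 - 1 / rrTail b

/-- `b` is the regular reduced continued fraction expansion
`[[1; b_1, …, b_l]]` of `x`, with all entries at least `2`. -/
def IsRRCF (x : ℚ) (b : List ℕ) : Prop :=
  (∀ bi ∈ b, 2 ≤ bi) ∧ x = rrcfVal b

/-- `Θ_k`: rationals in `(0,1)` whose regular reduced continued fraction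
expansion satisfies `L(x) = b_1 + ⋯ + b_l = k + 1`. -/
def Theta (k : ℕ) : Set ℚ :=
  {x | x ∈ Set.Ioo (0 : ℚ) 1 ∧ ∃ b : List ℕ, IsRRCF x b ∧ b.sum = k + 1}

/-- `Ξ_n = {0, 1} ∪ Θ_1 ∪ ⋯ ∪ Θ_n`. -/
def Xi (n : ℕ) : Set ℚ :=
  {0, 1} ∪ ⋃ k ∈ Finset.Icc 1 n, Theta k

namespace SBAux

/-- left child map -/
def f (x : ℚ) : ℚ := x / (x + 1)
/-- right child map -/
def g (x : ℚ) : ℚ := 1 / (2 - x)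

lemma f_zero : f 0 = 0 := by norm_num [f]
lemma f_one : f 1 = 1/2 := by norm_num [f]
lemma g_zero : g 0 = 1/2 := by norm_num [g]
lemma g_one : g 1 = 1 := by norm_num [g]

lemma den_pos' (x : ℚ) : (0:ℚ) < (x.den : ℚ) := by exact_mod_cast x.pos

lemma mul_den_eq_num (x : ℚ) : x * (x.den : ℚ) = (x.num : ℚ) := by
  have hd : ((x.den : ℚ)) ≠ 0 := (den_pos' x).ne'
  calc x * (x.den : ℚ) = ((x.num : ℚ)/(x.den:ℚ)) * (x.den:ℚ) := by rw [Rat.num_div_den x]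
    _ = (x.num : ℚ) := div_mul_cancel₀ _ hd

lemma num_den_f {x : ℚ} (hx : 0 ≤ x) :
    (f x).num = x.num ∧ ((f x).den : ℤ) = x.num + x.den := by
  have hnum : 0 ≤ x.num := Rat.num_nonneg.mpr hx
  have hdpos : (0:ℤ) < (x.den : ℤ) := by exact_mod_cast x.pos
  have hb : (0:ℤ) < x.num + x.den := by linarith
  have hcop : Nat.Coprime x.num.natAbs (x.num + (x.den:ℤ)).natAbs := by
    have h1 : IsCoprime x.num (x.den : ℤ) := Int.isCoprime_iff_gcd_eq_one.mpr x.reduced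
    have h2 : IsCoprime x.num (x.num + x.den) := by
      have := h1.add_mul_left_right 1
      rw [mul_one] at this
      rwa [add_comm] at this
    exact Int.isCoprime_iff_gcd_eq_one.mp h2
  have hval : f x = ((x.num : ℚ)) / (((x.num + (x.den:ℤ) : ℤ)) : ℚ) := by
    have hd : ((x.den : ℚ)) ≠ 0 := (den_pos' x).ne'
    have hx1 : x + 1 ≠ 0 := by positivity
    have hb' : (((x.num + (x.den:ℤ) : ℤ)) : ℚ) ≠ 0 := by
      exact_mod_cast hb.ne'
    rw [f, div_eq_div_iff hx1 hb']
    push_cast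
    have := mul_den_eq_num x
    ring_nf
    nlinarith [mul_den_eq_num x]
  constructor
  · rw [hval]; exact Rat.num_div_eq_of_coprime hb hcop
  · rw [hval]; exact Rat.den_div_eq_of_coprime hb hcop

lemma num_le_den {x : ℚ} (hx : x ≤ 1) : x.num ≤ (x.den : ℤ) := by
  have := mul_den_eq_num x
  have h2 : (x.num : ℚ) ≤ (x.den : ℚ) := by nlinarith [den_pos' x]
  exact_mod_cast h2

lemma num_den_g {x : ℚ} (hx0 : 0 ≤ x) (hx1 : x ≤ 1) :
    (g x).num = (x.den : ℤ) ∧ ((g x).den : ℤ) = 2 * x.den - x.num := by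
  have hnum : 0 ≤ x.num := Rat.num_nonneg.mpr hx0
  have hdpos : (0:ℤ) < (x.den : ℤ) := by exact_mod_cast x.pos
  have hle : x.num ≤ (x.den : ℤ) := num_le_den hx1
  have hb : (0:ℤ) < 2 * x.den - x.num := by linarith
  have hcop : Nat.Coprime (x.den:ℤ).natAbs (2 * (x.den:ℤ) - x.num).natAbs := by
    have h1 : IsCoprime (x.den : ℤ) x.num := (Int.isCoprime_iff_gcd_eq_one.mpr x.reduced : IsCoprime x.num (x.den:ℤ)).symm
    have h2 : IsCoprime (x.den : ℤ) (2 * x.den - x.num) := by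
      have := (h1.add_mul_left_right (-2)).neg_right
      have e : -(x.num + (x.den:ℤ) * (-2)) = 2 * x.den - x.num := by ring
      rwa [e] at this
    exact Int.isCoprime_iff_gcd_eq_one.mp h2
  have hval : g x = (((x.den:ℤ)) : ℚ) / (((2 * (x.den:ℤ) - x.num : ℤ)) : ℚ) := by
    have h2x : (0:ℚ) < 2 - x := by linarith
    have hb' : (((2 * (x.den:ℤ) - x.num : ℤ)) : ℚ) ≠ 0 := by exact_mod_cast hb.ne'
    rw [g, div_eq_div_iff h2x.ne' hb']
    push_cast
    nlinarith [mul_den_eq_num x]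
  constructor
  · rw [hval]; exact Rat.num_div_eq_of_coprime hb hcop
  · rw [hval]; exact Rat.den_div_eq_of_coprime hb hcop

end SBAux

namespace SBAux

lemma f_div {a b : ℚ} (ha : 0 ≤ a) (hb : 0 < b) : f (a/b) = a/(a+b) := by
  have hab : (0:ℚ) < a + b := by linarith
  have h1 : a/b + 1 = (a+b)/b := by field_simp
  rw [f, h1]
  rw [div_div_div_eq]
  rw [mul_comm b (a+b), mul_div_mul_right _ _ hb.ne']

lemma g_div {a b : ℚ} (hb : 0 < b) : g (a/b) = b/(2*b-a) := by
  have h1 : (2:ℚ) - a/b = (2*b-a)/b := by field_simp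
  rw [g, h1, one_div_div]

lemma mediant_comm_f {u v : ℚ} (hu : 0 ≤ u) (hv : 0 ≤ v) :
    mediant (f u) (f v) = f (mediant u v) := by
  obtain ⟨hnu, hdu⟩ := num_den_f hu
  obtain ⟨hnv, hdv⟩ := num_den_f hv
  have hnu' : 0 ≤ u.num := Rat.num_nonneg.mpr hu
  have hnv' : 0 ≤ v.num := Rat.num_nonneg.mpr hv
  have hA : (0:ℚ) ≤ ((u.num + v.num : ℤ) : ℚ) := by exact_mod_cast add_nonneg hnu' hnv'
  have hB : (0:ℚ) < ((u.den + v.den : ℕ) : ℚ) := by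
    have := u.pos; have := v.pos; exact_mod_cast Nat.add_pos_left u.pos v.den
  simp only [mediant]
  rw [f_div hA hB]
  have h1 : ((f u).den : ℚ) = (u.num : ℚ) + u.den := by exact_mod_cast hdu
  have h2 : ((f v).den : ℚ) = (v.num : ℚ) + v.den := by exact_mod_cast hdv
  have h3 : ((f u).num : ℚ) = (u.num : ℚ) := by exact_mod_cast hnu
  have h4 : ((f v).num : ℚ) = (v.num : ℚ) := by exact_mod_cast hnv
  push_cast
  rw [h1, h2, h3, h4]
  ring

lemma mediant_comm_g {u v : ℚ} (hu0 : 0 ≤ u) (hu1 : u ≤ 1) (hv0 : 0 ≤ v) (hv1 : v ≤ 1) :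
    mediant (g u) (g v) = g (mediant u v) := by
  obtain ⟨hnu, hdu⟩ := num_den_g hu0 hu1
  obtain ⟨hnv, hdv⟩ := num_den_g hv0 hv1
  have hB : (0:ℚ) < ((u.den + v.den : ℕ) : ℚ) := by
    exact_mod_cast Nat.add_pos_left u.pos v.den
  simp only [mediant]
  rw [g_div hB]
  have h1 : ((g u).den : ℚ) = 2 * (u.den : ℚ) - u.num := by exact_mod_cast hdu
  have h2 : ((g v).den : ℚ) = 2 * (v.den : ℚ) - v.num := by exact_mod_cast hdv
  have h3 : ((g u).num : ℚ) = (u.den : ℚ) := by exact_mod_cast hnu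
  have h4 : ((g v).num : ℚ) = (v.den : ℚ) := by exact_mod_cast hnv
  push_cast
  rw [h1, h2, h3, h4]
  ring

lemma mediant_between {x y : ℚ} (h : x < y) : x < mediant x y ∧ mediant x y < y := by
  have hq : (0:ℚ) < (x.den : ℚ) := den_pos' x
  have hs : (0:ℚ) < (y.den : ℚ) := den_pos' y
  have hx := mul_den_eq_num x
  have hy := mul_den_eq_num y
  have hkey : (x.num : ℚ) * (y.den:ℚ) < (y.num:ℚ) * (x.den:ℚ) := by
    nlinarith [mul_lt_mul_of_pos_right (mul_lt_mul_of_pos_right h hq) hs]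
  have hqs : (0:ℚ) < ((x.den + y.den : ℕ) : ℚ) := by push_cast; linarith
  constructor
  · rw [mediant, lt_div_iff₀ hqs]
    push_cast
    nlinarith
  · rw [mediant, div_lt_iff₀ hqs]
    push_cast
    nlinarith

lemma f_mono {u v : ℚ} (hu : 0 ≤ u) (h : u ≤ v) : f u ≤ f v := by
  have h1 : (0:ℚ) < u + 1 := by linarith
  have h2 : (0:ℚ) < v + 1 := by linarith
  rw [f, f, div_le_div_iff₀ h1 h2]
  nlinarith

lemma f_lt_f {u v : ℚ} (hu : 0 ≤ u) (h : u < v) : f u < f v := by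
  have h1 : (0:ℚ) < u + 1 := by linarith
  have h2 : (0:ℚ) < v + 1 := by linarith
  rw [f, f, div_lt_div_iff₀ h1 h2]
  nlinarith

lemma lt_of_f_lt {u v : ℚ} (hu : 0 ≤ u) (hv : 0 ≤ v) (h : f u < f v) : u < v := by
  by_contra hc
  exact absurd (f_mono hv (not_lt.mp hc)) (not_le.mpr h)

lemma g_mono {u v : ℚ} (hv : v ≤ 1) (h : u ≤ v) : g u ≤ g v := by
  have h1 : (0:ℚ) < 2 - u := by linarith
  have h2 : (0:ℚ) < 2 - v := by linarith
  rw [g, g, div_le_div_iff₀ h1 h2]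
  nlinarith

lemma g_lt_g {v u : ℚ} (hv : v ≤ 1) (h : u < v) : g u < g v := by
  have h1 : (0:ℚ) < 2 - u := by linarith
  have h2 : (0:ℚ) < 2 - v := by linarith
  rw [g, g, div_lt_div_iff₀ h1 h2]
  nlinarith

lemma lt_of_g_lt {u v : ℚ} (hu : u ≤ 1) (hv : v ≤ 1) (h : g u < g v) : u < v := by
  by_contra hc
  exact absurd (g_mono hu (not_lt.mp hc)) (not_le.mpr h)

lemma f_mem {x : ℚ} (h0 : 0 ≤ x) (h1 : x ≤ 1) : f x ∈ Set.Icc (0:ℚ) (1/2) := by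
  have hp : (0:ℚ) < x + 1 := by linarith
  constructor
  · exact div_nonneg h0 hp.le
  · rw [f, div_le_iff₀ hp]; linarith

lemma g_mem {x : ℚ} (h0 : 0 ≤ x) (h1 : x ≤ 1) : g x ∈ Set.Icc (1/2 : ℚ) 1 := by
  have hp : (0:ℚ) < 2 - x := by linarith
  constructor
  · rw [g, le_div_iff₀ hp]; linarith
  · rw [g, div_le_one hp]; linarith

lemma mem_f_image {S : Set ℚ} (hS : S ⊆ Set.Icc 0 1) {ξ : ℚ} (h1 : ξ < 1) :
    ξ ∈ f '' S ↔ ξ/(1-ξ) ∈ S := by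
  have h1' : (0:ℚ) < 1 - ξ := by linarith
  constructor
  · rintro ⟨u, huS, rfl⟩
    have hu0 : 0 ≤ u := (hS huS).1
    have hup : (0:ℚ) < u + 1 := by linarith
    have : f u / (1 - f u) = u := by
      rw [f, show 1 - u/(u+1) = 1/(u+1) by field_simp; ring, div_div_div_eq]
      field_simp
    rwa [this]
  · intro hmem
    refine ⟨ξ/(1-ξ), hmem, ?_⟩
    rw [f, show ξ/(1-ξ) + 1 = 1/(1-ξ) by field_simp; ring, div_div_div_eq]
    field_simp

lemma mem_g_image {S : Set ℚ} (hS : S ⊆ Set.Icc 0 1) {ξ : ℚ} (h0 : 0 < ξ) :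
    ξ ∈ g '' S ↔ 2 - 1/ξ ∈ S := by
  constructor
  · rintro ⟨u, huS, rfl⟩
    have hu1 : u ≤ 1 := (hS huS).2
    have hup : (0:ℚ) < 2 - u := by linarith
    have : 2 - 1 / g u = u := by
      rw [g, one_div_one_div]; ring
    rwa [this]
  · intro hmem
    refine ⟨2 - 1/ξ, hmem, ?_⟩
    rw [g, show (2:ℚ) - (2 - 1/ξ) = 1/ξ by ring, one_div_one_div]

end SBAux

namespace SBAux

lemma sternBrocot_succ (n : ℕ) :
    sternBrocot (n+1) = sternBrocot n ∪
      {z | ∃ x y : ℚ, IsConsecutive (sternBrocot n) x y ∧ z = mediant x y} := rfl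

lemma sternBrocot_inv : ∀ n : ℕ,
    (0:ℚ) ∈ sternBrocot n ∧ (1:ℚ) ∈ sternBrocot n ∧ sternBrocot n ⊆ Set.Icc (0:ℚ) 1 := by
  intro n
  induction n with
  | zero =>
    refine ⟨Or.inl rfl, Or.inr rfl, ?_⟩
    rintro z (rfl | rfl) <;> norm_num
  | succ n ih =>
    obtain ⟨h0, h1, hsub⟩ := ih
    refine ⟨Or.inl h0, Or.inl h1, ?_⟩
    rintro z (hz | ⟨x, y, hc, rfl⟩)
    · exact hsub hz
    · obtain ⟨hx, hy, hxy, -⟩ := hc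
      obtain ⟨hl, hr⟩ := mediant_between hxy
      exact ⟨le_trans (hsub hx).1 hl.le, le_trans hr.le (hsub hy).2⟩

/-- characterization of consecutive pairs in `f '' S ∪ g '' S`. -/
lemma isConsecutive_union {S : Set ℚ} (hS : S ⊆ Set.Icc 0 1)
    (h0S : (0:ℚ) ∈ S) (h1S : (1:ℚ) ∈ S) (x y : ℚ) :
    IsConsecutive (f '' S ∪ g '' S) x y ↔
      (∃ u v, IsConsecutive S u v ∧ x = f u ∧ y = f v) ∨
      (∃ u v, IsConsecutive S u v ∧ x = g u ∧ y = g v) := by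
  have hfr : ∀ w ∈ S, f w ∈ Set.Icc (0:ℚ) (1/2) := fun w hw => f_mem (hS hw).1 (hS hw).2
  have hgr : ∀ w ∈ S, g w ∈ Set.Icc (1/2:ℚ) 1 := fun w hw => g_mem (hS hw).1 (hS hw).2
  constructor
  · rintro ⟨hx, hy, hxy, hbet⟩
    rcases le_or_gt y (1/2) with hy2 | hy2
    · -- both ≤ 1/2 : f-side
      left
      have hx2 : x < 1/2 := lt_of_lt_of_le hxy hy2
      have hxf : ∃ u ∈ S, x = f u := by
        rcases hx with ⟨u, hu, rfl⟩ | ⟨u, hu, rfl⟩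
        · exact ⟨u, hu, rfl⟩
        · exact absurd (hgr u hu).1 (not_le.mpr hx2)
      have hyf : ∃ v ∈ S, y = f v := by
        rcases hy with ⟨v, hv, rfl⟩ | ⟨v, hv, rfl⟩
        · exact ⟨v, hv, rfl⟩
        · have : g v = 1/2 := le_antisymm hy2 (hgr v hv).1
          exact ⟨1, h1S, by rw [this, f_one]⟩
      obtain ⟨u, hu, rfl⟩ := hxf
      obtain ⟨v, hv, rfl⟩ := hyf
      have huv : u < v := lt_of_f_lt (hS hu).1 (hS hv).1 hxy
      refine ⟨u, v, ⟨hu, hv, huv, ?_⟩, rfl, rfl⟩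
      rintro w hw ⟨hw1, hw2⟩
      exact hbet (f w) (Or.inl ⟨w, hw, rfl⟩)
        ⟨f_lt_f (hS hu).1 hw1, f_lt_f (hS hw).1 hw2⟩
    · rcases le_or_gt (1/2) x with hx2 | hx2
      · -- both ≥ 1/2 : g-side
        right
        have hxg : ∃ u ∈ S, x = g u := by
          rcases hx with ⟨u, hu, rfl⟩ | ⟨u, hu, rfl⟩
          · have : f u = 1/2 := le_antisymm (hfr u hu).2 hx2
            exact ⟨0, h0S, by rw [this, g_zero]⟩
          · exact ⟨u, hu, rfl⟩
        have hyg : ∃ v ∈ S, y = g v := by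
          rcases hy with ⟨v, hv, rfl⟩ | ⟨v, hv, rfl⟩
          · exact absurd (hfr v hv).2 (not_le.mpr hy2)
          · exact ⟨v, hv, rfl⟩
        obtain ⟨u, hu, rfl⟩ := hxg
        obtain ⟨v, hv, rfl⟩ := hyg
        have huv : u < v := lt_of_g_lt (hS hu).2 (hS hv).2 hxy
        refine ⟨u, v, ⟨hu, hv, huv, ?_⟩, rfl, rfl⟩
        rintro w hw ⟨hw1, hw2⟩
        exact hbet (g w) (Or.inr ⟨w, hw, rfl⟩)
          ⟨g_lt_g (hS hw).2 hw1, g_lt_g (hS hv).2 hw2⟩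
      · -- x < 1/2 < y : impossible since 1/2 = f 1 is in between
        exfalso
        exact hbet (1/2) (Or.inl ⟨1, h1S, f_one⟩) ⟨hx2, hy2⟩
  · rintro (⟨u, v, ⟨hu, hv, huv, hbet⟩, rfl, rfl⟩ | ⟨u, v, ⟨hu, hv, huv, hbet⟩, rfl, rfl⟩)
    · refine ⟨Or.inl ⟨u, hu, rfl⟩, Or.inl ⟨v, hv, rfl⟩, f_lt_f (hS hu).1 huv, ?_⟩
      rintro z (⟨w, hw, rfl⟩ | ⟨w, hw, rfl⟩) ⟨hz1, hz2⟩
      · exact hbet w hw ⟨lt_of_f_lt (hS hu).1 (hS hw).1 hz1,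
          lt_of_f_lt (hS hw).1 (hS hv).1 hz2⟩
      · have h1 : g w < f v := hz2
        have h2 : (1/2 : ℚ) ≤ g w := (hgr w hw).1
        have h3 : f v ≤ 1/2 := (hfr v hv).2
        linarith
    · refine ⟨Or.inr ⟨u, hu, rfl⟩, Or.inr ⟨v, hv, rfl⟩, g_lt_g (hS hv).2 huv, ?_⟩
      rintro z (⟨w, hw, rfl⟩ | ⟨w, hw, rfl⟩) ⟨hz1, hz2⟩
      · have h1 : g u < f w := hz1
        have h2 : (1/2 : ℚ) ≤ g u := (hgr u hu).1
        have h3 : f w ≤ 1/2 := (hfr w hw).2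
        linarith
      · exact hbet w hw ⟨lt_of_g_lt (hS hu).2 (hS hw).2 hz1,
          lt_of_g_lt (hS hw).2 (hS hv).2 hz2⟩

/-- KEY LEMMA: the Stern–Brocot self-similarity. -/
lemma sternBrocot_succ_eq : ∀ n : ℕ,
    sternBrocot (n+1) = f '' sternBrocot n ∪ g '' sternBrocot n := by
  intro n
  induction n with
  | zero =>
    have hcons : ∀ x y : ℚ, IsConsecutive (sternBrocot 0) x y ↔ x = 0 ∧ y = 1 := by
      intro x y
      constructor
      · rintro ⟨(rfl | rfl), (rfl | rfl), hxy, -⟩ <;> first | exact ⟨rfl, rfl⟩ | norm_num at hxy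
      · rintro ⟨rfl, rfl⟩
        refine ⟨Or.inl rfl, Or.inr rfl, by norm_num, ?_⟩
        rintro z (rfl | rfl) ⟨h1, h2⟩
        · exact absurd h1 (lt_irrefl 0)
        · exact absurd h2 (lt_irrefl 1)
    have hmed : mediant 0 1 = 1/2 := by
      norm_num [mediant]
    ext z
    simp only [sternBrocot_succ, Set.mem_union, Set.mem_setOf_eq]
    constructor
    · rintro (hz | ⟨x, y, hc, rfl⟩)
      · rcases hz with rfl | rfl
        · exact Or.inl ⟨0, Or.inl rfl, f_zero⟩
        · exact Or.inr ⟨1, Or.inr rfl, g_one⟩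
      · obtain ⟨rfl, rfl⟩ := (hcons x y).mp hc
        rw [hmed]
        exact Or.inl ⟨1, Or.inr rfl, f_one⟩
    · rintro (⟨w, hw, rfl⟩ | ⟨w, hw, rfl⟩)
      · rcases hw with rfl | rfl
        · rw [f_zero]; exact Or.inl (Or.inl rfl)
        · rw [f_one]
          exact Or.inr ⟨0, 1, (hcons 0 1).mpr ⟨rfl, rfl⟩, hmed.symm⟩
      · rcases hw with rfl | rfl
        · rw [g_zero]
          exact Or.inr ⟨0, 1, (hcons 0 1).mpr ⟨rfl, rfl⟩, hmed.symm⟩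
        · rw [g_one]; exact Or.inl (Or.inr rfl)
  | succ n ih =>
    obtain ⟨h0, h1, hsub⟩ := sternBrocot_inv n
    have hM : {z | ∃ x y : ℚ, IsConsecutive (sternBrocot (n+1)) x y ∧ z = mediant x y}
        = f '' {z | ∃ x y : ℚ, IsConsecutive (sternBrocot n) x y ∧ z = mediant x y}
          ∪ g '' {z | ∃ x y : ℚ, IsConsecutive (sternBrocot n) x y ∧ z = mediant x y} := by
      rw [ih]
      ext z
      simp only [Set.mem_setOf_eq, Set.mem_union, Set.mem_image]
      constructor
      · rintro ⟨x, y, hc, rfl⟩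
        rcases (isConsecutive_union hsub h0 h1 x y).mp hc with
            ⟨u, v, hcuv, rfl, rfl⟩ | ⟨u, v, hcuv, rfl, rfl⟩
        · exact Or.inl ⟨mediant u v, ⟨u, v, hcuv, rfl⟩,
            (mediant_comm_f (hsub hcuv.1).1 (hsub hcuv.2.1).1).symm⟩
        · exact Or.inr ⟨mediant u v, ⟨u, v, hcuv, rfl⟩,
            (mediant_comm_g (hsub hcuv.1).1 (hsub hcuv.1).2
              (hsub hcuv.2.1).1 (hsub hcuv.2.1).2).symm⟩
      · rintro (⟨w, ⟨u, v, hcuv, rfl⟩, rfl⟩ | ⟨w, ⟨u, v, hcuv, rfl⟩, rfl⟩)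
        · exact ⟨f u, f v, (isConsecutive_union hsub h0 h1 _ _).mpr
            (Or.inl ⟨u, v, hcuv, rfl, rfl⟩),
            (mediant_comm_f (hsub hcuv.1).1 (hsub hcuv.2.1).1).symm⟩
        · exact ⟨g u, g v, (isConsecutive_union hsub h0 h1 _ _).mpr
            (Or.inr ⟨u, v, hcuv, rfl, rfl⟩),
            (mediant_comm_g (hsub hcuv.1).1 (hsub hcuv.1).2
              (hsub hcuv.2.1).1 (hsub hcuv.2.1).2).symm⟩
    calc sternBrocot (n+2)
        = sternBrocot (n+1) ∪
            {z | ∃ x y : ℚ, IsConsecutive (sternBrocot (n+1)) x y ∧ z = mediant x y} :=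
          sternBrocot_succ (n+1)
      _ = (f '' sternBrocot n ∪ g '' sternBrocot n) ∪
            (f '' {z | ∃ x y : ℚ, IsConsecutive (sternBrocot n) x y ∧ z = mediant x y}
              ∪ g '' {z | ∃ x y : ℚ, IsConsecutive (sternBrocot n) x y ∧ z = mediant x y}) := by
          rw [hM, ih]
      _ = f '' sternBrocot (n+1) ∪ g '' sternBrocot (n+1) := by
          rw [sternBrocot_succ n, Set.image_union, Set.image_union,
            Set.union_union_union_comm]

end SBAux

namespace SBAux

lemma cfVal_cons (a : ℕ) (t : List ℕ) : cfVal (a::t) = 1/((a:ℚ) + cfVal t) := rfl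

lemma getLastD_indep {t : List ℕ} (ht : t ≠ []) (d d' : ℕ) : t.getLastD d = t.getLastD d' := by
  cases t with
  | nil => exact absurd rfl ht
  | cons b m =>
    rw [List.getLastD_eq_getLast?, List.getLastD_eq_getLast?,
      List.getLast?_eq_getLast ht, Option.getD_some, Option.getD_some]

lemma cfVal_mem : ∀ t : List ℕ, t ≠ [] → (∀ ai ∈ t, 1 ≤ ai) → 2 ≤ t.getLastD 0 →
    cfVal t ∈ Set.Ioo (0:ℚ) 1 := by
  intro t
  induction t with
  | nil => intro h; exact absurd rfl h
  | cons a m ih =>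
    intro _ hpos hlast
    rcases eq_or_ne m [] with rfl | hm
    · have ha : 2 ≤ a := by simpa [List.getLastD_cons] using hlast
      have ha' : (2:ℚ) ≤ (a:ℚ) := by exact_mod_cast ha
      rw [cfVal_cons]
      simp only [cfVal, add_zero]
      constructor
      · positivity
      · rw [div_lt_one (by linarith)]; linarith
    · have hlast' : 2 ≤ m.getLastD 0 := by
        rw [List.getLastD_cons] at hlast
        rwa [getLastD_indep hm a 0] at hlast
      have hv := ih hm (fun x hx => hpos x (List.mem_cons_of_mem a hx)) hlast'
      have ha : 1 ≤ a := hpos a List.mem_cons_self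
      have ha' : (1:ℚ) ≤ (a:ℚ) := by exact_mod_cast ha
      rw [cfVal_cons]
      constructor
      · have : (0:ℚ) < (a:ℚ) + cfVal m := by linarith [hv.1]
        positivity
      · rw [div_lt_one (by linarith [hv.1])]
        linarith [hv.1]

lemma getLastD_le_sum : ∀ a : List ℕ, a.getLastD 0 ≤ a.sum := by
  intro a
  induction a with
  | nil => simp
  | cons x m ih =>
    rw [List.getLastD_cons, List.sum_cons]
    rcases eq_or_ne m [] with rfl | hm
    · simp
    · rw [getLastD_indep hm x 0]
      omega

lemma IsCF_sum_ge {ξ : ℚ} {a : List ℕ} (h0 : 0 < ξ) (ha : IsCF ξ a) : 2 ≤ a.sum := by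
  obtain ⟨hpos, hlast, hval⟩ := ha
  have hne : a ≠ [] := by
    rintro rfl
    rw [hval] at h0
    simp [cfVal] at h0
  calc 2 ≤ a.getLastD 0 := hlast
    _ ≤ a.sum := getLastD_le_sum a

lemma IsCF_half {a : List ℕ} (ha : IsCF (1/2 : ℚ) a) : a.sum = 2 := by
  obtain ⟨hpos, hlast, hval⟩ := ha
  cases a with
  | nil => norm_num [cfVal] at hval
  | cons a1 t =>
    rw [cfVal_cons] at hval
    have ha1 : 1 ≤ a1 := hpos a1 List.mem_cons_self
    have ha1' : (1:ℚ) ≤ (a1:ℚ) := by exact_mod_cast ha1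
    rcases eq_or_ne t [] with rfl | ht
    · have h0 : cfVal ([] : List ℕ) = 0 := rfl
      rw [h0, add_zero] at hval
      have h2 : (2:ℚ) = (a1:ℚ) := by
        rw [div_eq_div_iff (by norm_num) (by linarith)] at hval
        linarith
      have : a1 = 2 := by exact_mod_cast h2.symm
      simp [this]
    · have hv := cfVal_mem t ht (fun x hx => hpos x (List.mem_cons_of_mem a1 hx))
        (by rw [List.getLastD_cons] at hlast; rwa [getLastD_indep ht a1 0] at hlast)
      have h2 : (2:ℚ) = (a1:ℚ) + cfVal t := by
        rw [div_eq_div_iff (by norm_num) (by linarith [hv.1])] at hval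
        linarith
      have hlt : (a1:ℚ) < 2 := by linarith [hv.1]
      have hgt : (1:ℚ) < (a1:ℚ) := by linarith [hv.2]
      have h1 : a1 < 2 := by exact_mod_cast hlt
      have h2' : 1 < a1 := by exact_mod_cast hgt
      omega

end SBAux

namespace SBAux

lemma step {ξ : ℚ} {a : List ℕ} (hξ : ξ ∈ Set.Ioo (0:ℚ) 1) (ha : IsCF ξ a) (hne : ξ ≠ 1/2) :
    ∃ ξ' a', ξ' ∈ Set.Ioo (0:ℚ) 1 ∧ IsCF ξ' a' ∧ a'.sum + 1 = a.sum ∧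
      ((ξ < 1/2 ∧ ξ' = ξ/(1-ξ)) ∨ (1/2 < ξ ∧ ξ' = 2 - 1/ξ)) := by
  obtain ⟨hpos, hlast, hval⟩ := ha
  cases a with
  | nil =>
    rw [hval] at hξ
    exact absurd hξ.1 (by norm_num [cfVal])
  | cons a1 t =>
  have ha1 : 1 ≤ a1 := hpos a1 List.mem_cons_self
  have ha1' : (1:ℚ) ≤ (a1:ℚ) := by exact_mod_cast ha1
  have hlastt : ∀ _ : t ≠ [], 2 ≤ t.getLastD 0 := fun ht => by
    rw [List.getLastD_cons] at hlast
    rwa [getLastD_indep ht a1 0] at hlast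
  have hvt : 0 ≤ cfVal t ∧ cfVal t < 1 := by
    rcases eq_or_ne t [] with rfl | ht
    · norm_num [cfVal]
    · have := cfVal_mem t ht (fun x hx => hpos x (List.mem_cons_of_mem a1 hx)) (hlastt ht)
      exact ⟨this.1.le, this.2⟩
  rw [cfVal_cons] at hval
  have hden : (0:ℚ) < (a1:ℚ) + cfVal t := by linarith [hvt.1]
  rcases Nat.lt_or_ge a1 2 with hc | h2
  · -- a1 = 1
    have h1 : a1 = 1 := by omega
    subst h1
    have ht : t ≠ [] := by
      rintro rfl
      simp [List.getLastD_cons] at hlast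
    have hgt : 1/2 < ξ := by
      rw [hval]
      exact one_div_lt_one_div_of_lt (by linarith [hvt.1]) (by norm_num; linarith [hvt.2])
    have heq2 : 2 - 1/ξ = 1 - cfVal t := by
      rw [hval, one_div_one_div]; push_cast; ring
    cases t with
    | nil => exact absurd rfl ht
    | cons b1 t' =>
    have hb1 : 1 ≤ b1 := hpos b1 (by simp)
    have hlastt' : ∀ _ : t' ≠ [], 2 ≤ t'.getLastD 0 := fun ht' => by
      have h := hlastt (List.cons_ne_nil b1 t')
      rw [List.getLastD_cons] at h
      rwa [getLastD_indep ht' b1 0] at h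
    have hvt' : 0 ≤ cfVal t' ∧ cfVal t' < 1 := by
      rcases eq_or_ne t' [] with rfl | ht'
      · norm_num [cfVal]
      · have := cfVal_mem t' ht' (fun x hx => hpos x (by simp [hx])) (hlastt' ht')
        exact ⟨this.1.le, this.2⟩
    rcases Nat.lt_or_ge b1 2 with hcb | hb2
    · -- b1 = 1
      have hb1' : b1 = 1 := by omega
      subst hb1'
      have ht' : t' ≠ [] := by
        rintro rfl
        have := hlastt (List.cons_ne_nil 1 [])
        simp [List.getLastD_cons] at this
      cases t' with
      | nil => exact absurd rfl ht'
      | cons b2 t'' =>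
      have hb2 : 1 ≤ b2 := hpos b2 (by simp)
      have hpos' : ∀ x ∈ (b2+1)::t'', 1 ≤ x := by
        intro x hx
        rcases List.mem_cons.mp hx with rfl | hx'
        · omega
        · exact hpos x (by simp [hx'])
      have hlast' : 2 ≤ ((b2+1)::t'').getLastD 0 := by
        rcases eq_or_ne t'' [] with rfl | ht''
        · simp [List.getLastD_cons]; omega
        · rw [List.getLastD_cons, getLastD_indep ht'' (b2+1) 0]
          have h := hlastt' (List.cons_ne_nil b2 t'')
          rw [List.getLastD_cons, getLastD_indep ht'' b2 0] at h
          exact h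
      have hvt'' : 0 ≤ cfVal t'' ∧ cfVal t'' < 1 := by
        rcases eq_or_ne t'' [] with rfl | ht''
        · norm_num [cfVal]
        · have hl := hlastt' (List.cons_ne_nil b2 t'')
          rw [List.getLastD_cons, getLastD_indep ht'' b2 0] at hl
          have := cfVal_mem t'' ht'' (fun x hx => hpos x (by simp [hx])) hl
          exact ⟨this.1.le, this.2⟩
      refine ⟨cfVal ((b2+1)::t''), (b2+1)::t'',
        cfVal_mem _ (List.cons_ne_nil _ _) hpos' hlast',
        ⟨hpos', hlast', rfl⟩, ?_, Or.inr ⟨hgt, ?_⟩⟩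
      · simp [List.sum_cons]; omega
      · rw [heq2, cfVal_cons, cfVal_cons, cfVal_cons]
        have hb2' : (1:ℚ) ≤ (b2:ℚ) := by exact_mod_cast hb2
        have hd1 : (0:ℚ) < (b2:ℚ) + cfVal t'' := by linarith [hvt''.1]
        have hd2 : (0:ℚ) < 1 + 1/((b2:ℚ) + cfVal t'') := by positivity
        have hd3 : (0:ℚ) < 1 + (b2:ℚ) + cfVal t'' := by linarith
        rw [eq_comm]
        push_cast
        field_simp [hd1.ne', hd2.ne', hd3.ne']
        linear_combination (-1 : ℚ) * mul_inv_cancel₀ hd3.ne'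
    · -- b1 ≥ 2
      have hb2' : (2:ℚ) ≤ (b1:ℚ) := by exact_mod_cast hb2
      by_cases hsp : t' = [] ∧ b1 = 2
      · -- special case a = [1,2]
        obtain ⟨rfl, rfl⟩ := hsp
        refine ⟨cfVal [2], [2], by norm_num [cfVal], ⟨by simp, by simp [List.getLastD_cons], rfl⟩,
          by simp, Or.inr ⟨hgt, ?_⟩⟩
        rw [heq2]
        norm_num [cfVal]
      · have hkey : t' = [] → 3 ≤ b1 := by
          intro ht'
          rcases Nat.lt_or_ge b1 3 with h3 | h3
          · exfalso; exact hsp ⟨ht', by omega⟩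
          · exact h3
        have hpos' : ∀ x ∈ 1::(b1-1)::t', 1 ≤ x := by
          intro x hx
          rcases List.mem_cons.mp hx with rfl | hx'
          · omega
          · rcases List.mem_cons.mp hx' with rfl | hx''
            · omega
            · exact hpos x (by simp [hx''])
        have hlast' : 2 ≤ (1::(b1-1)::t').getLastD 0 := by
          rcases eq_or_ne t' [] with rfl | ht'
          · have h3 := hkey rfl
            simp [List.getLastD_cons, List.getLastD_nil]
            omega
          · rw [List.getLastD_cons, List.getLastD_cons, getLastD_indep ht' (b1-1) 0]
            exact hlastt' ht'
        refine ⟨cfVal (1::(b1-1)::t'), 1::(b1-1)::t',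
          cfVal_mem _ (List.cons_ne_nil _ _) hpos' hlast',
          ⟨hpos', hlast', rfl⟩, ?_, Or.inr ⟨hgt, ?_⟩⟩
        · simp [List.sum_cons]; omega
        · rw [heq2, cfVal_cons, cfVal_cons, cfVal_cons, Nat.cast_sub hb1]
          push_cast
          have hd1 : (0:ℚ) < (b1:ℚ) - 1 + cfVal t' := by linarith [hvt'.1]
          have hd2 : (0:ℚ) < (b1:ℚ) + cfVal t' := by linarith [hvt'.1]
          have hd3 : (0:ℚ) < 1 + 1/((b1:ℚ) - 1 + cfVal t') := by positivity
          rw [eq_comm]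
          field_simp [hd1.ne', hd2.ne', hd3.ne']
          ring
  · -- a1 ≥ 2
    have h2' : (2:ℚ) ≤ (a1:ℚ) := by exact_mod_cast h2
    have hlt : ξ < 1/2 := by
      refine lt_of_le_of_ne ?_ hne
      rw [hval]
      exact one_div_le_one_div_of_le (by norm_num) (by linarith [hvt.1])
    have hkey : t = [] → 3 ≤ a1 := by
      intro ht
      rcases Nat.lt_or_ge a1 3 with h3 | h3
      · exfalso
        have ha2 : a1 = 2 := by omega
        subst ht ha2
        norm_num [cfVal] at hval
        exact hne hval
      · exact h3
    have hpos' : ∀ x ∈ (a1-1)::t, 1 ≤ x := by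
      intro x hx
      rcases List.mem_cons.mp hx with rfl | hx'
      · omega
      · exact hpos x (List.mem_cons_of_mem a1 hx')
    have hlast' : 2 ≤ ((a1-1)::t).getLastD 0 := by
      rcases eq_or_ne t [] with rfl | ht
      · have h3 := hkey rfl
        simp [List.getLastD_cons, List.getLastD_nil]
        omega
      · rw [List.getLastD_cons, getLastD_indep ht (a1-1) 0]
        exact hlastt ht
    refine ⟨cfVal ((a1-1)::t), (a1-1)::t,
      cfVal_mem _ (List.cons_ne_nil _ _) hpos' hlast',
      ⟨hpos', hlast', rfl⟩, ?_, Or.inl ⟨hlt, ?_⟩⟩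
    · simp [List.sum_cons]; omega
    · rw [cfVal_cons, hval, Nat.cast_sub ha1]
      push_cast
      have hd1 : (0:ℚ) < (a1:ℚ) - 1 + cfVal t := by linarith [hvt.1]
      have hd4 : (1:ℚ) - 1/((a1:ℚ) + cfVal t) ≠ 0 := by
        have : 1/((a1:ℚ) + cfVal t) ≤ 1/2 :=
          one_div_le_one_div_of_le (by norm_num) (by linarith [hvt.1])
        intro hcon
        rw [sub_eq_zero] at hcon
        rw [← hcon] at this
        linarith
      rw [eq_comm]
      field_simp [hd1.ne', hden.ne', hd4]
      linear_combination mul_inv_cancel₀ hd1.ne'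

end SBAux

namespace SBAux

lemma sternBrocot_zero : sternBrocot 0 = {0, 1} := rfl

lemma main : ∀ n : ℕ, ∀ ξ : ℚ, ξ ∈ Set.Ioo (0:ℚ) 1 → ∀ a : List ℕ, IsCF ξ a →
    (ξ ∈ sternBrocot n ↔ a.sum ≤ n + 1) := by
  intro n
  induction n with
  | zero =>
    intro ξ hξ a ha
    have h2 : 2 ≤ a.sum := IsCF_sum_ge hξ.1 ha
    rw [sternBrocot_zero]
    constructor
    · rintro (rfl | rfl)
      · exact absurd hξ.1 (lt_irrefl _)
      · exact absurd hξ.2 (lt_irrefl _)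
    · intro h
      omega
  | succ n ih =>
    intro ξ hξ a ha
    obtain ⟨h0, h1, hsub⟩ := sternBrocot_inv n
    rw [sternBrocot_succ_eq n]
    by_cases hhalf : ξ = 1/2
    · subst hhalf
      have hsum := IsCF_half ha
      constructor
      · intro _; omega
      · intro _
        exact Or.inl ⟨1, h1, f_one⟩
    · obtain ⟨ξ', a', hξ', ha', hsum, hcase⟩ := step hξ ha hhalf
      rcases hcase with ⟨hlt, he⟩ | ⟨hgt, he⟩
      · have hnotg : ξ ∉ g '' sternBrocot n := by
          rintro ⟨u, hu, rfl⟩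
          exact absurd (g_mem (hsub hu).1 (hsub hu).2).1 (not_le.mpr hlt)
        have hiff : ξ ∈ f '' sternBrocot n ∪ g '' sternBrocot n ↔ ξ ∈ f '' sternBrocot n :=
          ⟨fun h => h.resolve_right hnotg, Or.inl⟩
        rw [hiff, mem_f_image hsub hξ.2, ← he, ih ξ' hξ' a' ha']
        omega
      · have hnotf : ξ ∉ f '' sternBrocot n := by
          rintro ⟨u, hu, rfl⟩
          exact absurd (f_mem (hsub hu).1 (hsub hu).2).2 (not_le.mpr hgt)
        have hiff : ξ ∈ f '' sternBrocot n ∪ g '' sternBrocot n ↔ ξ ∈ g '' sternBrocot n :=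
          ⟨fun h => h.resolve_left hnotf, Or.inr⟩
        rw [hiff, mem_g_image hsub hξ.1, ← he, ih ξ' hξ' a' ha']
        omega

end SBAux


/-- a rational `ξ ∈ (0,1)` belongs to `ℱ_n` iff the sum of its
partial quotients is at most `n + 1`. -/
theorem mem_sternBrocot_iff_sum_partial_quotients_le
    (n : ℕ) (ξ : ℚ) (hξ : ξ ∈ Set.Ioo (0 : ℚ) 1)
    (a : List ℕ) (ha : IsCF ξ a) :
    ξ ∈ sternBrocot n ↔ a.sum ≤ n + 1 := by
  exact SBAux.main n ξ hξ a ha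
end

section
/- Let x ∈ (0,1) be rational with regular continued fraction expansion x = [0; a_1, …, a_m] (a_i positive integers, a_m ≥ 2) and regular reduced continued fraction expansion x = [[1; b_1, …, b_l]]. Then the string (b_1, …, b_l) is obtained from (a_1, …, a_m) by replacing each a_i with odd index i by the string 2,2,…,2 of length a_i − 1 (the empty string if a_i = 1), each a_i with even index i ≠ m by the single entry a_i + 2, and a_m (if m is even) by the single entry a_m + 1. -/
open Set Filter

/-- The transformation producing the regular reduced continued fraction string
from the regular continued fraction string: an `aᵢ` at an odd (1-based)
position becomes `2,2,…,2` (`aᵢ - 1` twos), an `aᵢ` at an even non-final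
position becomes `aᵢ + 2`, and a final even-position `a_m` becomes `a_m + 1`. -/
def cfToRRCF : List ℕ → List ℕ
  | [] => []
  | [a] => List.replicate (a - 1) 2
  | [a, b] => List.replicate (a - 1) 2 ++ [b + 1]
  | a :: b :: t => List.replicate (a - 1) 2 ++ (b + 2) :: cfToRRCF t

lemma getLastD_of_ne_nil {t : List ℕ} (ht : t ≠ []) (d d' : ℕ) :
    t.getLastD d = t.getLastD d' := by
  cases t with
  | nil => exact absurd rfl ht
  | cons x s => rw [List.getLastD_cons, List.getLastD_cons]

lemma cfVal_mem : ∀ a : List ℕ, a ≠ [] → (∀ x ∈ a, 1 ≤ x) → 2 ≤ a.getLastD 0 →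
    0 < cfVal a ∧ cfVal a < 1
  | c :: t, _, h, hl => by
    rcases eq_or_ne t [] with rfl | ht
    · have h2 : 2 ≤ c := by simpa using hl
      have hc : (2:ℚ) ≤ c := by exact_mod_cast h2
      simp only [cfVal, add_zero]
      constructor
      · positivity
      · rw [div_lt_one (by linarith)]; linarith
    · have hl' : 2 ≤ t.getLastD 0 := by
        rw [List.getLastD_cons, getLastD_of_ne_nil ht c 0] at hl
        exact hl
      obtain ⟨ih1, ih2⟩ := cfVal_mem t ht (fun x hx => h x (by simp [hx])) hl'
      have hc : (1:ℚ) ≤ c := by exact_mod_cast h c (by simp)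
      simp only [cfVal]
      constructor
      · positivity
      · rw [div_lt_one (by linarith)]; linarith

lemma rrTail_rep : ∀ n : ℕ, rrTail (List.replicate (n+1) 2) = ((n:ℚ)+2)/((n:ℚ)+1)
  | 0 => by norm_num [rrTail, List.replicate]
  | n+1 => by
    have ih := rrTail_rep n
    rw [List.replicate_succ,
      show rrTail (2 :: List.replicate (n+1) 2)
        = 2 - 1 / rrTail (List.replicate (n+1) 2) from rfl, ih]
    have h1 : ((n:ℚ) + 1) ≠ 0 := by positivity
    have h2 : ((n:ℚ) + 2) ≠ 0 := by positivity
    push_cast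
    field_simp
    ring

lemma rrTail_rep_append (s : List ℕ) (hs : 1 < rrTail s) :
    ∀ n : ℕ, rrTail (List.replicate n 2 ++ s) =
      (((n:ℚ)+1) * rrTail s - n) / ((n:ℚ) * rrTail s - n + 1)
  | 0 => by simp
  | n+1 => by
    have ih := rrTail_rep_append s hs n
    have hden : (0:ℚ) < (n:ℚ) * rrTail s - n + 1 := by nlinarith
    have hnum : (0:ℚ) < ((n:ℚ)+1) * rrTail s - n := by nlinarith
    rw [List.replicate_succ, List.cons_append,
      show rrTail (2 :: (List.replicate n 2 ++ s))
        = 2 - 1 / rrTail (List.replicate n 2 ++ s) from rfl, ih]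
    push_cast
    have hden2 : (0:ℚ) < ((n:ℚ)+1) * rrTail s - (n+1) + 1 := by nlinarith
    rw [one_div_div, sub_div' hnum.ne', div_eq_div_iff hnum.ne' hden2.ne']
    ring

lemma alg1 (m w : ℚ) (hm : 0 ≤ m) (hw : 0 < w) :
    ((m+1)*(w+1) - m)/(m*(w+1) - m + 1) = 1/(1 - 1/((m+1) + 1/w)) := by
  have h1 : (0:ℚ) < m*(w+1) - m + 1 := by nlinarith
  have h2 : (0:ℚ) < (m+1) + 1/w := by positivity
  have h3 : (0:ℚ) < 1 - 1/((m+1) + 1/w) := by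
    rw [sub_pos, div_lt_one h2]
    have : 0 < 1/w := by positivity
    linarith
  have h4 : (0:ℚ) < 1 + m*w := by nlinarith
  field_simp [h4.ne']
  have h5 : (1+m*w) * (1+m*w)⁻¹ = 1 := mul_inv_cancel₀ h4.ne'
  rw [div_eq_div_iff (by nlinarith) (by nlinarith)]; ring

lemma rrTail_cfToRRCF : ∀ a : List ℕ, (∀ x ∈ a, 1 ≤ x) → 2 ≤ a.getLastD 0 →
    rrTail (cfToRRCF a) = 1 / (1 - cfVal a)
  | [], _, hl => by simp at hl
  | [c], _, hl => by
    have h2 : 2 ≤ c := by simpa using hl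
    obtain ⟨n, rfl⟩ : ∃ n, c = n + 2 := ⟨c - 2, by omega⟩
    show rrTail (List.replicate (n + 2 - 1) 2) = _
    rw [show n + 2 - 1 = n + 1 from rfl, rrTail_rep]
    simp only [cfVal, add_zero]
    have h1 : ((n:ℚ) + 1) ≠ 0 := by positivity
    have h2 : ((n:ℚ) + 2) ≠ 0 := by positivity
    have h3 : (0:ℚ) < 1 - 1/((n:ℚ)+2) := by
      rw [sub_pos, div_lt_one (by positivity)]; linarith [Nat.cast_nonneg (α := ℚ) n]
    push_cast
    rw [show (1:ℚ) - 1/((n:ℚ)+2) = ((n:ℚ)+1)/((n:ℚ)+2) from by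
      field_simp; ring, one_div_div]
  | [c, d], h, hl => by
    have hc : 1 ≤ c := h c (by simp)
    have hd : 2 ≤ d := by simpa [List.getLastD_cons] using hl
    obtain ⟨m, rfl⟩ : ∃ m, c = m + 1 := ⟨c - 1, by omega⟩
    have hdq : (1:ℚ) < (d:ℚ) + 1 := by
      have : (2:ℚ) ≤ d := by exact_mod_cast hd
      linarith
    have hs : rrTail [d + 1] = (d:ℚ) + 1 := by
      simp [rrTail]
    show rrTail (List.replicate (m + 1 - 1) 2 ++ [d+1]) = _
    rw [show m + 1 - 1 = m from rfl, rrTail_rep_append [d+1] (by rw [hs]; exact hdq), hs]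
    simp only [cfVal, add_zero]
    have hdq0 : (0:ℚ) < d := by
      have : (2:ℚ) ≤ d := by exact_mod_cast hd
      linarith
    have := alg1 (m:ℚ) (d:ℚ) (Nat.cast_nonneg m) hdq0
    push_cast
    push_cast at this
    linarith [this]
  | c :: d :: e :: t, h, hl => by
    have hc : 1 ≤ c := h c (by simp)
    have hd : 1 ≤ d := h d (by simp)
    obtain ⟨m, rfl⟩ : ∃ m, c = m + 1 := ⟨c - 1, by omega⟩
    have hl' : 2 ≤ (e :: t).getLastD 0 := by
      rw [List.getLastD_cons, List.getLastD_cons] at hl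
      rwa [getLastD_of_ne_nil (List.cons_ne_nil e t) 0 d]
    have hmem : ∀ x ∈ e :: t, 1 ≤ x := fun x hx => h x (by simp [hx])
    have ih := rrTail_cfToRRCF (e :: t) hmem hl'
    obtain ⟨hv0, hv1⟩ := cfVal_mem (e :: t) (List.cons_ne_nil e t) hmem hl'
    set v := cfVal (e :: t) with hv
    have h1v : (0:ℚ) < 1 - v := by linarith
    have hheadtail : rrTail ((d + 2) :: cfToRRCF (e :: t)) = (d:ℚ) + 1 + v := by
      show ((d + 2 : ℕ) : ℚ) - 1 / rrTail (cfToRRCF (e :: t)) = _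
      rw [ih, one_div_one_div]
      push_cast
      ring
    have hdq : (1:ℚ) ≤ d := by exact_mod_cast hd
    show rrTail (List.replicate (m + 1 - 1) 2 ++ (d + 2) :: cfToRRCF (e :: t)) = _
    rw [show m + 1 - 1 = m from rfl,
      rrTail_rep_append _ (by rw [hheadtail]; linarith) m, hheadtail]
    have hgoal : cfVal ((m+1) :: d :: e :: t) = 1 / (((m:ℚ)+1) + 1/((d:ℚ) + v)) := by
      show 1 / (((m+1 : ℕ):ℚ) + cfVal (d :: e :: t)) = _
      have hdd : cfVal (d :: e :: t) = 1 / ((d:ℚ) + v) := rfl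
      rw [hdd]
      push_cast
      ring_nf
    rw [hgoal, show ((d:ℚ)+1+v) = ((d:ℚ)+v+1) from by ring]
    exact alg1 (m:ℚ) ((d:ℚ) + v) (Nat.cast_nonneg m) (by linarith)

lemma cfToRRCF_two_le : ∀ a : List ℕ, (∀ x ∈ a, 1 ≤ x) → ∀ y ∈ cfToRRCF a, 2 ≤ y
  | [], _, y, hy => by simp [cfToRRCF] at hy
  | [c], _, y, hy => by
    have := List.eq_of_mem_replicate (show y ∈ List.replicate (c-1) 2 from hy)
    omega
  | [c, d], h, y, hy => by
    rcases List.mem_append.mp hy with h1 | h1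
    · have := List.eq_of_mem_replicate h1; omega
    · have hd : 1 ≤ d := h d (by simp)
      simp at h1; omega
  | c :: d :: e :: t, h, y, hy => by
    rcases List.mem_append.mp hy with h1 | h1
    · have := List.eq_of_mem_replicate h1; omega
    · rcases List.mem_cons.mp h1 with rfl | h2
      · omega
      · exact cfToRRCF_two_le (e :: t) (fun x hx => h x (by simp [hx])) y h2

lemma rrTail_gt_one : ∀ b : List ℕ, (∀ x ∈ b, 2 ≤ x) → b ≠ [] → 1 < rrTail b
  | [], _, h => absurd rfl h
  | c :: t, h, _ => by
    have hc : (2:ℚ) ≤ c := by exact_mod_cast h c (by simp)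
    rcases eq_or_ne t [] with rfl | ht
    · simp only [rrTail, div_zero]; linarith
    · have ih := rrTail_gt_one t (fun x hx => h x (by simp [hx])) ht
      have h1 : 0 < 1 / rrTail t := by positivity
      have h2 : 1 / rrTail t < 1 := by
        rw [div_lt_one (by linarith)]; linarith
      simp only [rrTail]; linarith

lemma inv_rrTail_bounds (t : List ℕ) (h : ∀ x ∈ t, 2 ≤ x) :
    0 ≤ 1 / rrTail t ∧ 1 / rrTail t < 1 := by
  rcases eq_or_ne t [] with rfl | ht
  · simp [rrTail]
  · have h1 := rrTail_gt_one t h ht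
    refine ⟨by positivity, ?_⟩
    rw [div_lt_one (by linarith)]; linarith

lemma rrTail_inj : ∀ b b' : List ℕ, (∀ x ∈ b, 2 ≤ x) → (∀ x ∈ b', 2 ≤ x) →
    1 / rrTail b = 1 / rrTail b' → b = b'
  | [], [], _, _, _ => rfl
  | [], c' :: t', _, h', he => by
    exfalso
    rw [show rrTail [] = 0 from rfl, div_zero] at he
    have h1 := rrTail_gt_one (c'::t') h' (by simp)
    have h2 : 0 < 1 / rrTail (c'::t') := by positivity
    linarith
  | c :: t, [], h, _, he => by
    exfalso
    rw [show rrTail [] = 0 from rfl, div_zero] at he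
    have h1 := rrTail_gt_one (c::t) h (by simp)
    have h2 : 0 < 1 / rrTail (c::t) := by positivity
    linarith
  | c :: t, c' :: t', h, h', he => by
    have hb := rrTail_gt_one (c::t) h (by simp)
    have hb' := rrTail_gt_one (c'::t') h' (by simp)
    rw [div_eq_div_iff (by linarith) (by linarith), one_mul, one_mul] at he
    have ht : ∀ x ∈ t, 2 ≤ x := fun x hx => h x (by simp [hx])
    have ht' : ∀ x ∈ t', 2 ≤ x := fun x hx => h' x (by simp [hx])
    obtain ⟨hu0, hu1⟩ := inv_rrTail_bounds t ht
    obtain ⟨hv0, hv1⟩ := inv_rrTail_bounds t' ht'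
    simp only [rrTail] at he
    have hcc : c = c' := by
      have h1 : (c:ℚ) < c' + 1 := by linarith
      have h2 : (c':ℚ) < c + 1 := by linarith
      have h1' : c < c' + 1 := by exact_mod_cast h1
      have h2' : c' < c + 1 := by exact_mod_cast h2
      omega
    subst hcc
    have huv : 1 / rrTail t = 1 / rrTail t' := by linarith
    rw [rrTail_inj t t' ht ht' huv]


/-- the regular reduced continued fraction expansion of `x` is
obtained from its regular continued fraction expansion by the rules above. -/
theorem rrcf_eq_cfToRRCF
    (x : ℚ) (hx : x ∈ Set.Ioo (0 : ℚ) 1)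
    (a : List ℕ) (ha : IsCF x a)
    (b : List ℕ) (hb : IsRRCF x b) :
    b = cfToRRCF a := by
  obtain ⟨ha1, ha2, hax⟩ := ha
  obtain ⟨hb1, hbx⟩ := hb
  have hane : a ≠ [] := by rintro rfl; simp at ha2
  obtain ⟨hm0, hm1⟩ := cfVal_mem a hane ha1 ha2
  have hT := rrTail_cfToRRCF a ha1 ha2
  have hval : rrcfVal (cfToRRCF a) = cfVal a := by
    rw [rrcfVal, hT, one_div_one_div]; ring
  have h2 := cfToRRCF_two_le a ha1
  apply rrTail_inj b (cfToRRCF a) hb1 h2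
  have he : (1:ℚ) - 1 / rrTail b = 1 - 1 / rrTail (cfToRRCF a) := by
    rw [show (1:ℚ) - 1 / rrTail b = rrcfVal b from rfl,
      show (1:ℚ) - 1 / rrTail (cfToRRCF a) = rrcfVal (cfToRRCF a) from rfl,
      hval, ← hax, ← hbx]
  linarith
end

section
/- Let x < y < z be three consecutive elements of Ξ_n with y ∈ Θ_n, and let y^l = x ⊕ y and y^r = y ⊕ z denote the mediants of the corresponding pairs. Then y^l ∈ Θ_{n+2} and y^r ∈ Θ_{n+1}. -/
open Set Filter

namespace RRCFAux

/-! ### Basic recursion for `rrcfVal` -/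

def Valid (b : List ℕ) : Prop := ∀ x ∈ b, 2 ≤ x

lemma Valid.tail {b : ℕ} {t : List ℕ} (h : Valid (b :: t)) : Valid t :=
  fun x hx => h x (List.mem_cons_of_mem _ hx)

lemma Valid.head {b : ℕ} {t : List ℕ} (h : Valid (b :: t)) : 2 ≤ b :=
  h b List.mem_cons_self

lemma Valid.dropLast {b : List ℕ} (h : Valid b) : Valid b.dropLast :=
  fun x hx => h x ((List.dropLast_sublist b).subset hx)

lemma valid_sum_ge {c : List ℕ} (hc : Valid c) (h : c ≠ []) : 2 ≤ c.sum := by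
  cases c with
  | nil => exact absurd rfl h
  | cons a t =>
    have := hc.head
    simp only [List.sum_cons]
    omega

lemma rrcfVal_nil : rrcfVal [] = 1 := by simp [rrcfVal, rrTail]

lemma rrcfVal_cons (b : ℕ) (t : List ℕ) :
    rrcfVal (b :: t) = 1 - 1 / ((b : ℚ) - 1 + rrcfVal t) := by
  show 1 - 1 / ((b : ℚ) - 1 / rrTail t) = _
  rw [rrcfVal]
  ring_nf

/-- `lo b` is the infimum of the cylinder of expansions starting with `b`. -/
def lo : List ℕ → ℚ
  | [] => 0
  | b :: t => 1 - 1 / ((b : ℚ) - 1 + lo t)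

/-! ### Monotonicity helpers -/

lemma g_lt_g {B u v : ℚ} (hB : 1 ≤ B) (hu : 0 ≤ u) (huv : u < v) :
    1 - 1 / (B + u) < 1 - 1 / (B + v) := by
  have h1 : 0 < B + u := by linarith
  have h2 : 1 / (B + v) < 1 / (B + u) := one_div_lt_one_div_of_lt h1 (by linarith)
  linarith

lemma g_le_g {B u v : ℚ} (hB : 1 ≤ B) (hu : 0 ≤ u) (huv : u ≤ v) :
    1 - 1 / (B + u) ≤ 1 - 1 / (B + v) := by
  rcases eq_or_lt_of_le huv with rfl | h
  · exact le_rfl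
  · exact (g_lt_g hB hu h).le

lemma g_lt_reflect {B u v : ℚ} (hB : 1 ≤ B) (hu : 0 ≤ u) (hv : 0 ≤ v)
    (h : 1 - 1 / (B + u) < 1 - 1 / (B + v)) : u < v := by
  by_contra hc
  exact absurd h (not_lt.mpr (g_le_g hB hv (not_lt.mp hc)))

lemma g_le_reflect {B u v : ℚ} (hB : 1 ≤ B) (hu : 0 ≤ u) (hv : 0 ≤ v)
    (h : 1 - 1 / (B + u) ≤ 1 - 1 / (B + v)) : u ≤ v := by
  by_contra hc
  exact absurd h (not_le.mpr (g_lt_g hB hv (not_le.mp hc)))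

/-! ### Bounds -/

lemma val_bounds : ∀ b : List ℕ, Valid b → 0 < rrcfVal b ∧ rrcfVal b ≤ 1
  | [], _ => by rw [rrcfVal_nil]; norm_num
  | b :: t, h => by
    obtain ⟨h1, h2⟩ := val_bounds t h.tail
    have hb : (2 : ℚ) ≤ (b : ℚ) := by exact_mod_cast h.head
    rw [rrcfVal_cons]
    have hd : 1 < (b : ℚ) - 1 + rrcfVal t := by linarith
    have hd0 : 0 < (b : ℚ) - 1 + rrcfVal t := by linarith
    have : 1 / ((b : ℚ) - 1 + rrcfVal t) < 1 := by
      rw [div_lt_one hd0]; linarith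
    have hp : 0 < 1 / ((b : ℚ) - 1 + rrcfVal t) := by positivity
    constructor <;> linarith

lemma lo_bounds : ∀ b : List ℕ, Valid b → 0 ≤ lo b ∧ lo b < 1
  | [], _ => by rw [lo]; norm_num
  | b :: t, h => by
    obtain ⟨h1, h2⟩ := lo_bounds t h.tail
    have hb : (2 : ℚ) ≤ (b : ℚ) := by exact_mod_cast h.head
    rw [lo]
    have hd : 0 < (b : ℚ) - 1 + lo t := by linarith
    have hd1 : 1 ≤ (b : ℚ) - 1 + lo t := by linarith
    have : 1 / ((b : ℚ) - 1 + lo t) ≤ 1 := by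
      rw [div_le_one hd]; linarith
    have hp : 0 < 1 / ((b : ℚ) - 1 + lo t) := by positivity
    constructor <;> linarith

lemma val_range {b : ℕ} {t : List ℕ} (h : Valid (b :: t)) :
    1 - 1 / ((b : ℚ) - 1) < rrcfVal (b :: t) ∧ rrcfVal (b :: t) ≤ 1 - 1 / (b : ℚ) := by
  obtain ⟨h1, h2⟩ := val_bounds t h.tail
  have hb : (2 : ℚ) ≤ (b : ℚ) := by exact_mod_cast h.head
  have hB : 1 ≤ (b : ℚ) - 1 := by linarith
  rw [rrcfVal_cons]
  constructor
  · have := g_lt_g (u := 0) (v := rrcfVal t) hB le_rfl h1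
    simpa using this
  · have := g_le_g (u := rrcfVal t) (v := 1) hB h1.le h2
    have he : (b : ℚ) - 1 + 1 = (b : ℚ) := by ring
    rwa [he] at this

lemma lo_range {b : ℕ} {t : List ℕ} (h : Valid (b :: t)) :
    1 - 1 / ((b : ℚ) - 1) ≤ lo (b :: t) ∧ lo (b :: t) < 1 - 1 / (b : ℚ) := by
  obtain ⟨h1, h2⟩ := lo_bounds t h.tail
  have hb : (2 : ℚ) ≤ (b : ℚ) := by exact_mod_cast h.head
  have hB : 1 ≤ (b : ℚ) - 1 := by linarith
  rw [lo]
  constructor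
  · have := g_le_g (u := 0) (v := lo t) hB le_rfl h1
    simpa using this
  · have := g_lt_g (u := lo t) (v := 1) hB h1 h2
    have he : (b : ℚ) - 1 + 1 = (b : ℚ) := by ring
    rwa [he] at this

lemma lo_lt_val : ∀ b : List ℕ, Valid b → lo b < rrcfVal b
  | [], _ => by rw [lo, rrcfVal_nil]; norm_num
  | b :: t, h => by
    have hb : (2 : ℚ) ≤ (b : ℚ) := by exact_mod_cast h.head
    have hB : 1 ≤ (b : ℚ) - 1 := by linarith
    rw [lo, rrcfVal_cons]
    exact g_lt_g hB (lo_bounds t h.tail).1 (lo_lt_val t h.tail)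

lemma val_lt_one {b : ℕ} {t : List ℕ} (h : Valid (b :: t)) : rrcfVal (b :: t) < 1 := by
  have hb : (2 : ℚ) ≤ (b : ℚ) := by exact_mod_cast h.head
  have := (val_range h).2
  have : 0 < 1 / (b : ℚ) := by positivity
  linarith [(val_range h).2]

/-- First entries of expansions in overlapping ranges agree. -/
lemma head_eq {c : ℕ} {s : List ℕ} (hc : Valid (c :: s)) {b : ℕ} (hb : 2 ≤ b)
    (h1 : 1 - 1 / ((b : ℚ) - 1) < rrcfVal (c :: s))
    (h2 : rrcfVal (c :: s) ≤ 1 - 1 / (b : ℚ)) : c = b := by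
  have hcb : (2 : ℚ) ≤ (c : ℚ) := by exact_mod_cast hc.head
  have hbb : (2 : ℚ) ≤ (b : ℚ) := by exact_mod_cast hb
  obtain ⟨r1, r2⟩ := val_range hc
  -- from h1 and r2 : 1 - 1/(b-1) < 1 - 1/c, so 1/c < 1/(b-1), so b-1 < c
  have k1 : (b : ℚ) - 1 < (c : ℚ) := by
    have : 1 / (c : ℚ) < 1 / ((b : ℚ) - 1) := by linarith
    have hbp : 0 < (b : ℚ) - 1 := by linarith
    have hcp : 0 < (c : ℚ) := by linarith
    rwa [div_lt_div_iff₀ hcp hbp, one_mul, one_mul] at this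
  have k2 : (c : ℚ) - 1 < (b : ℚ) := by
    have : 1 / (b : ℚ) < 1 / ((c : ℚ) - 1) := by linarith
    have hcp : 0 < (c : ℚ) - 1 := by linarith
    have hbp : 0 < (b : ℚ) := by linarith
    rwa [div_lt_div_iff₀ hbp hcp, one_mul, one_mul] at this
  have k1' : b < c + 1 := by
    have : (b : ℚ) < (c : ℚ) + 1 := by linarith
    exact_mod_cast this
  have k2' : c < b + 1 := by
    have : (c : ℚ) < (b : ℚ) + 1 := by linarith
    exact_mod_cast this
  omega

/-- Cylinder lemma: a value strictly above `lo b` and at most `rrcfVal b`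
has expansion starting with `b`. -/
lemma cylinder : ∀ b c : List ℕ, Valid b → Valid c → b ≠ [] →
    lo b < rrcfVal c → rrcfVal c ≤ rrcfVal b → b <+: c
  | [], _, _, _, hne, _, _ => absurd rfl hne
  | b₁ :: t, c, hb, hc, _, h1, h2 => by
    cases c with
    | nil =>
      rw [rrcfVal_nil] at h2
      exact absurd h2 (not_le.mpr (val_lt_one hb))
    | cons c₁ s =>
      have hb1 : (2 : ℚ) ≤ (b₁ : ℚ) := by exact_mod_cast hb.head
      have hB : 1 ≤ (b₁ : ℚ) - 1 := by linarith
      have hceq : c₁ = b₁ := by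
        refine head_eq hc hb.head ?_ ?_
        · exact lt_of_le_of_lt (lo_range hb).1 h1
        · exact le_trans h2 (val_range hb).2
      subst hceq
      rw [lo, rrcfVal_cons] at h1
      rw [rrcfVal_cons, rrcfVal_cons] at h2
      have hlo := (lo_bounds t hb.tail).1
      have hvs := (val_bounds s hc.tail).1
      have hvt := (val_bounds t hb.tail).1
      have r1 : lo t < rrcfVal s := g_lt_reflect hB hlo hvs.le h1
      have r2 : rrcfVal s ≤ rrcfVal t := g_le_reflect hB hvs.le hvt.le h2
      cases t with
      | nil => exact ⟨s, rfl⟩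
      | cons t₁ t' =>
        have := cylinder (t₁ :: t') s hb.tail hc.tail (by simp) r1 r2
        exact List.cons_prefix_cons.mpr ⟨rfl, this⟩

/-- Anything strictly between `rrcfVal b` and `rrcfVal b.dropLast` has larger sum. -/
lemma right_sum : ∀ b c : List ℕ, Valid b → Valid c → b ≠ [] →
    rrcfVal b < rrcfVal c → rrcfVal c < rrcfVal b.dropLast → b.sum + 1 ≤ c.sum
  | [], _, _, _, hne, _, _ => absurd rfl hne
  | [b₁], c, hb, hc, _, h1, h2 => by
    cases c with
    | nil =>
      rw [List.dropLast_singleton, rrcfVal_nil] at h2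
      exact absurd h2 (lt_irrefl _)
    | cons c₁ s =>
      have hb1 : (2 : ℚ) ≤ (b₁ : ℚ) := by exact_mod_cast hb.head
      have hv1 : rrcfVal [b₁] = 1 - 1 / (b₁ : ℚ) := by
        rw [rrcfVal_cons, rrcfVal_nil]; ring_nf
      rw [hv1] at h1
      have r2 := (val_range hc).2
      -- 1 - 1/b₁ < rrcfVal (c₁::s) ≤ 1 - 1/c₁  ⇒  b₁ < c₁
      have hc1 : (2 : ℚ) ≤ (c₁ : ℚ) := by exact_mod_cast hc.head
      have : 1 / (c₁ : ℚ) < 1 / (b₁ : ℚ) := by linarith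
      have hk : (b₁ : ℚ) < (c₁ : ℚ) := by
        have hbp : 0 < (b₁ : ℚ) := by linarith
        have hcp : 0 < (c₁ : ℚ) := by linarith
        rwa [div_lt_div_iff₀ hcp hbp, one_mul, one_mul] at this
      have hk' : b₁ < c₁ := by exact_mod_cast hk
      simp only [List.sum_cons, List.sum_singleton, List.sum_nil]
      have := s.sum.zero_le
      omega
  | b₁ :: t₁ :: t', c, hb, hc, _, h1, h2 => by
    set t := t₁ :: t' with ht
    have hdl : (b₁ :: t).dropLast = b₁ :: t.dropLast := by
      rw [ht]; simp [List.dropLast_cons₂]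
    rw [hdl] at h2
    have hb1 : (2 : ℚ) ≤ (b₁ : ℚ) := by exact_mod_cast hb.head
    have hB : 1 ≤ (b₁ : ℚ) - 1 := by linarith
    have htv : Valid t := hb.tail
    have htd : Valid (b₁ :: t.dropLast) := by
      intro x hx
      rcases List.mem_cons.mp hx with rfl | hx
      · exact hb.head
      · exact htv x ((List.dropLast_sublist t).subset hx)
    cases c with
    | nil =>
      rw [rrcfVal_nil] at h2
      exact absurd h2 (not_lt.mpr (val_lt_one htd).le)
    | cons c₁ s =>
      have hceq : c₁ = b₁ := by
        refine head_eq hc hb.head ?_ ?_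
        · exact lt_trans (val_range hb).1 h1
        · exact le_trans h2.le (val_range htd).2
      subst hceq
      rw [rrcfVal_cons c₁ t, rrcfVal_cons c₁ s] at h1
      rw [rrcfVal_cons c₁ s, rrcfVal_cons c₁ t.dropLast] at h2
      have hvs := (val_bounds s hc.tail).1
      have hvt := (val_bounds t htv).1
      have hvtd := (val_bounds t.dropLast htv.dropLast).1
      have r1 : rrcfVal t < rrcfVal s := g_lt_reflect hB hvt.le hvs.le h1
      have r2 : rrcfVal s < rrcfVal t.dropLast := g_lt_reflect hB hvs.le hvtd.le h2
      have := right_sum t s htv hc.tail (by rw [ht]; simp) r1 r2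
      simp only [List.sum_cons] at this ⊢
      omega

/-- `lo b` is either `0` or the value of a valid expansion with smaller sum. -/
lemma lo_rep : ∀ b : List ℕ, Valid b → b ≠ [] →
    lo b = 0 ∨ ∃ c, Valid c ∧ c ≠ [] ∧ lo b = rrcfVal c ∧ c.sum + 1 ≤ b.sum
  | [], _, hne => absurd rfl hne
  | b₁ :: t, hb, _ => by
    have hb2 : 2 ≤ b₁ := hb.head
    have key : ∀ m : ℕ, 2 ≤ m →
        (1 - 1 / ((m : ℚ) - 1) = 0 ∧ m = 2) ∨
        (2 ≤ m - 1 ∧ 1 - 1 / ((m : ℚ) - 1) = rrcfVal [m - 1]) := by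
      intro m hm
      rcases eq_or_lt_of_le hm with rfl | hm3
      · left; norm_num
      · right
        refine ⟨by omega, ?_⟩
        rw [rrcfVal_cons, rrcfVal_nil]
        have : ((m - 1 : ℕ) : ℚ) = (m : ℚ) - 1 := by
          have : (1 : ℕ) ≤ m := by omega
          push_cast [Nat.cast_sub this]
          ring
        rw [this]
        ring_nf
    cases t with
    | nil =>
      have hlo : lo [b₁] = 1 - 1 / ((b₁ : ℚ) - 1) := by rw [lo, lo]; ring_nf
      rcases key b₁ hb2 with ⟨h0, rfl⟩ | ⟨hm, hv⟩
      · left; rw [hlo, h0]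
      · right
        exact ⟨[b₁ - 1], by intro x hx; simp at hx; omega, by simp, by rw [hlo, hv],
          by simp; omega⟩
    | cons t₁ t' =>
      rcases lo_rep (t₁ :: t') hb.tail (by simp) with h0 | ⟨c, hcv, hcne, hceq, hcsum⟩
      · have hlo : lo (b₁ :: t₁ :: t') = 1 - 1 / ((b₁ : ℚ) - 1) := by
          rw [lo, h0]; ring_nf
        rcases key b₁ hb2 with ⟨h0', rfl⟩ | ⟨hm, hv⟩
        · left; rw [hlo, h0']
        · right
          refine ⟨[b₁ - 1], by intro x hx; simp at hx; omega, by simp,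
            by rw [hlo, hv], ?_⟩
          have h2 := hb2
          simp only [List.sum_cons, List.sum_singleton, List.sum_nil]
          omega
      · right
        refine ⟨b₁ :: c, ?_, by simp, ?_, ?_⟩
        · intro x hx
          rcases List.mem_cons.mp hx with rfl | hx
          · exact hb2
          · exact hcv x hx
        · rw [lo, hceq, rrcfVal_cons]
        · simp only [List.sum_cons] at *
          omega

lemma val_lt_val_dropLast : ∀ b : List ℕ, Valid b → b ≠ [] →
    rrcfVal b < rrcfVal b.dropLast
  | [], _, hne => absurd rfl hne
  | [b₁], hb, _ => by
    rw [List.dropLast_singleton, rrcfVal_nil]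
    exact val_lt_one hb
  | b₁ :: t₁ :: t', hb, _ => by
    have hb1 : (2 : ℚ) ≤ (b₁ : ℚ) := by exact_mod_cast hb.head
    have hB : 1 ≤ (b₁ : ℚ) - 1 := by linarith
    have hdl : (b₁ :: t₁ :: t').dropLast = b₁ :: (t₁ :: t').dropLast := by
      simp [List.dropLast_cons₂]
    rw [hdl, rrcfVal_cons b₁ (t₁ :: t'), rrcfVal_cons b₁ (t₁ :: t').dropLast]
    exact g_lt_g hB (val_bounds _ hb.tail).1.le
      (val_lt_val_dropLast (t₁ :: t') hb.tail (by simp))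

/-! ### Continuants -/

/-- Numerator/denominator pair of the value of `b` continued by `p.1/p.2`. -/
def NDp (p : ℕ × ℕ) : List ℕ → ℕ × ℕ
  | [] => p
  | b :: t => ((b - 2) * (NDp p t).2 + (NDp p t).1, (b - 1) * (NDp p t).2 + (NDp p t).1)

/-- Value of `b` continued below by value `v`. -/
def G : List ℕ → ℚ → ℚ
  | [], v => v
  | b :: t, v => 1 - 1 / ((b : ℚ) - 1 + G t v)

lemma G_append (b c : List ℕ) : rrcfVal (b ++ c) = G b (rrcfVal c) := by
  induction b with
  | nil => rfl
  | cons b₁ t ih => rw [List.cons_append, rrcfVal_cons, G, ih]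

lemma G_one (b : List ℕ) : rrcfVal b = G b 1 := by
  have := G_append b []
  rwa [List.append_nil, rrcfVal_nil] at this

lemma G_zero (b : List ℕ) : lo b = G b 0 := by
  induction b with
  | nil => rfl
  | cons b₁ t ih => rw [lo, G, ih]

lemma G_bounds : ∀ b : List ℕ, ∀ v : ℚ, Valid b → 0 ≤ v → v ≤ 1 → 0 ≤ G b v ∧ G b v ≤ 1
  | [], v, _, h0, h1 => ⟨h0, h1⟩
  | b :: t, v, hb, h0, h1 => by
    obtain ⟨g0, g1⟩ := G_bounds t v hb.tail h0 h1
    have hb2 : (2 : ℚ) ≤ (b : ℚ) := by exact_mod_cast hb.head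
    rw [G]
    have hd : 1 ≤ (b : ℚ) - 1 + G t v := by linarith
    have hd0 : 0 < (b : ℚ) - 1 + G t v := by linarith
    have hle : 1 / ((b : ℚ) - 1 + G t v) ≤ 1 := by
      rw [div_le_one hd0]; linarith
    have hp : 0 < 1 / ((b : ℚ) - 1 + G t v) := by positivity
    constructor <;> linarith

lemma NDp_den_pos {p : ℕ × ℕ} (hp : 0 < p.2) : ∀ b : List ℕ, Valid b → 0 < (NDp p b).2
  | [], _ => hp
  | b :: t, hb => by
    have := NDp_den_pos hp t hb.tail
    have hb2 := hb.head
    rw [NDp]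
    simp only
    have : 1 * (NDp p t).2 ≤ (b - 1) * (NDp p t).2 := Nat.mul_le_mul_right _ (by omega)
    omega

lemma NDp_coprime {p : ℕ × ℕ} (hp : Nat.Coprime p.1 p.2) :
    ∀ b : List ℕ, Valid b → Nat.Coprime (NDp p b).1 (NDp p b).2
  | [], _ => hp
  | b :: t, hb => by
    have ih := NDp_coprime hp t hb.tail
    have hb2 := hb.head
    rw [NDp]
    simp only
    have he : (b - 1) * (NDp p t).2 + (NDp p t).1
        = (NDp p t).2 + ((b - 2) * (NDp p t).2 + (NDp p t).1) := by
      have : b - 1 = (b - 2) + 1 := by omega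
      rw [this]; ring
    show Nat.Coprime ((b - 2) * (NDp p t).2 + (NDp p t).1)
      ((b - 1) * (NDp p t).2 + (NDp p t).1)
    rw [he, Nat.coprime_add_self_right, add_comm, Nat.coprime_add_mul_right_left]
    exact ih

lemma NDp_spec {p : ℕ × ℕ} (hp : 0 < p.2) :
    ∀ b : List ℕ, Valid b → G b ((p.1 : ℚ) / (p.2 : ℚ)) = ((NDp p b).1 : ℚ) / ((NDp p b).2 : ℚ)
  | [], _ => rfl
  | b :: t, hb => by
    have ih := NDp_spec hp t hb.tail
    have hb2 := hb.head
    have hb2' : (2 : ℚ) ≤ (b : ℚ) := by exact_mod_cast hb2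
    have hD : 0 < (NDp p t).2 := NDp_den_pos hp t hb.tail
    have hDq : (0 : ℚ) < ((NDp p t).2 : ℚ) := by exact_mod_cast hD
    set N := (NDp p t).1 with hN
    set D := (NDp p t).2 with hD'
    have hfrac : 0 ≤ (N : ℚ) / (D : ℚ) := by positivity
    rw [G, ih, NDp]
    simp only [← hN, ← hD']
    have hden : 0 < (b : ℚ) - 1 + (N : ℚ) / (D : ℚ) := by linarith
    have hc1 : ((b - 2 : ℕ) : ℚ) = (b : ℚ) - 2 := by
      push_cast [Nat.cast_sub hb2]; ring
    have hc2 : ((b - 1 : ℕ) : ℚ) = (b : ℚ) - 1 := by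
      push_cast [Nat.cast_sub (by omega : 1 ≤ b)]; ring
    have hden2 : (0 : ℚ) < ((b : ℚ) - 1) * (D : ℚ) + (N : ℚ) := by
      have h1 : (1 : ℚ) ≤ (b : ℚ) - 1 := by linarith
      have h2 : (0 : ℚ) ≤ (N : ℚ) := by positivity
      nlinarith
    push_cast [hc1, hc2]
    have h₁ : ((b : ℚ) - 1 + (N : ℚ) / (D : ℚ)) ≠ 0 := ne_of_gt hden
    have h₂ : (((b : ℚ) - 1) * (D : ℚ) + (N : ℚ)) ≠ 0 := ne_of_gt hden2
    have h₃ : (D : ℚ) ≠ 0 := ne_of_gt hDq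
    field_simp
    ring

lemma NDp_add (p q : ℕ × ℕ) : ∀ b : List ℕ,
    NDp (p.1 + q.1, p.2 + q.2) b = ((NDp p b).1 + (NDp q b).1, (NDp p b).2 + (NDp q b).2)
  | [] => rfl
  | b :: t => by
    rw [NDp, NDp_add p q t, NDp, NDp]
    simp only [Prod.mk.injEq]
    constructor <;> ring

lemma NDp_append (p : ℕ × ℕ) : ∀ t s : List ℕ, NDp p (t ++ s) = NDp (NDp p s) t
  | [], s => rfl
  | b :: t, s => by rw [List.cons_append, NDp, NDp_append p t s, NDp]

/-- Extract `num`/`den` from a coprime fraction representation. -/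
lemma num_den_of {a b : ℕ} (h : Nat.Coprime a b) (hb : 0 < b) {w : ℚ}
    (hw : w = (a : ℚ) / (b : ℚ)) : w.num = (a : ℤ) ∧ w.den = b := by
  have hb' : (0 : ℤ) < (b : ℤ) := by exact_mod_cast hb
  have hco : Nat.Coprime (a : ℤ).natAbs (b : ℤ).natAbs := by
    simpa using h
  have h1 : (((a : ℤ) : ℚ) / ((b : ℤ) : ℚ)).num = (a : ℤ) :=
    Rat.num_div_eq_of_coprime hb' hco
  have h2 : ((((a : ℤ) : ℚ) / ((b : ℤ) : ℚ)).den : ℤ) = (b : ℤ) :=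
    Rat.den_div_eq_of_coprime hb' hco
  have he : w = ((a : ℤ) : ℚ) / ((b : ℤ) : ℚ) := by push_cast; exact hw
  rw [he]
  exact ⟨h1, by exact_mod_cast h2⟩

/-! ### Membership lemmas for `Theta` and `Xi` -/

lemma mem_Theta_of {k : ℕ} {c : List ℕ} (hc : Valid c) (hne : c ≠ [])
    (hsum : c.sum = k + 1) : rrcfVal c ∈ Theta k := by
  refine ⟨⟨(val_bounds c hc).1, ?_⟩, c, ⟨hc, rfl⟩, hsum⟩
  cases c with
  | nil => exact absurd rfl hne
  | cons c₁ s => exact val_lt_one hc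

lemma zero_mem_Xi (n : ℕ) : (0 : ℚ) ∈ Xi n :=
  Set.mem_union_left _ (Set.mem_insert _ _)

lemma one_mem_Xi (n : ℕ) : (1 : ℚ) ∈ Xi n :=
  Set.mem_union_left _ (Set.mem_insert_of_mem _ rfl)

lemma mem_Xi_of_Theta {n k : ℕ} {w : ℚ} (h1 : 1 ≤ k) (h2 : k ≤ n) (hw : w ∈ Theta k) :
    w ∈ Xi n :=
  Set.mem_union_right _ (Set.mem_iUnion₂.mpr ⟨k, Finset.mem_Icc.mpr ⟨h1, h2⟩, hw⟩)

lemma Xi_elim {n : ℕ} {w : ℚ} (h : w ∈ Xi n) :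
    w = 0 ∨ w = 1 ∨ ∃ c, Valid c ∧ c ≠ [] ∧ w = rrcfVal c ∧ 2 ≤ c.sum ∧ c.sum ≤ n + 1 := by
  rcases h with h | h
  · rcases Set.mem_insert_iff.mp h with h | h
    · exact Or.inl h
    · exact Or.inr (Or.inl (Set.mem_singleton_iff.mp h))
  · right; right
    obtain ⟨k, hk, hw⟩ := Set.mem_iUnion₂.mp h
    obtain ⟨hio, c, ⟨hcv, hce⟩, hcs⟩ := hw
    have hk' := Finset.mem_Icc.mp hk
    have hcne : c ≠ [] := by
      rintro rfl
      rw [hce, rrcfVal_nil] at hio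
      exact absurd hio.2 (lt_irrefl 1)
    exact ⟨c, hcv, hcne, hce, valid_sum_ge hcv hcne, by omega⟩

lemma consec_left_unique {S : Set ℚ} {x x' y : ℚ}
    (h : IsConsecutive S x y) (h' : IsConsecutive S x' y) : x = x' := by
  rcases lt_trichotomy x x' with hl | he | hg
  · exact absurd ⟨hl, h'.2.2.1⟩ (h.2.2.2 x' h'.1)
  · exact he
  · exact absurd ⟨hg, h.2.2.1⟩ (h'.2.2.2 x h.1)

lemma consec_right_unique {S : Set ℚ} {x y y' : ℚ}
    (h : IsConsecutive S x y) (h' : IsConsecutive S x y') : y = y' := by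
  rcases lt_trichotomy y y' with hl | he | hg
  · exact absurd ⟨h.2.2.1, hl⟩ (h'.2.2.2 y h.2.1)
  · exact he
  · exact absurd ⟨h'.2.2.1, hg⟩ (h.2.2.2 y' h'.2.1)

lemma rrcfVal_two : rrcfVal [2] = ((1 : ℕ) : ℚ) / ((2 : ℕ) : ℚ) := by
  rw [rrcfVal_cons, rrcfVal_nil]; norm_num

lemma rrcfVal_single_succ (a : ℕ) (ha : 1 ≤ a) :
    rrcfVal [a + 1] = ((a : ℕ) : ℚ) / ((a + 1 : ℕ) : ℚ) := by
  rw [rrcfVal_cons, rrcfVal_nil]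
  have h0 : (0 : ℚ) < (a : ℚ) + 1 := by positivity
  push_cast
  field_simp
  ring

end RRCFAux


/-- if `x < y < z` are consecutive in `Ξ_n` with `y ∈ Θ_n`, then
`y^l = x ⊕ y ∈ Θ_{n+2}` and `y^r = y ⊕ z ∈ Θ_{n+1}`. -/
theorem mediant_mem_Theta
    (n : ℕ) (x y z : ℚ)
    (hxy : IsConsecutive (Xi n) x y) (hyz : IsConsecutive (Xi n) y z)
    (hy : y ∈ Theta n) :
    mediant x y ∈ Theta (n + 2) ∧ mediant y z ∈ Theta (n + 1) := by
  classical
  open RRCFAux in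
  obtain ⟨hyIoo, b, ⟨hbv', hbe⟩, hbsum⟩ := hy
  have hbv : RRCFAux.Valid b := hbv'
  subst hbe
  have hbne : b ≠ [] := by
    rintro rfl
    rw [RRCFAux.rrcfVal_nil] at hyIoo
    exact absurd hyIoo.2 (lt_irrefl 1)
  -- the left neighbour of `y` in `Ξ_n` is `lo b`
  have hlomem : RRCFAux.lo b ∈ Xi n := by
    rcases RRCFAux.lo_rep b hbv hbne with h0 | ⟨c, hcv, hcne, hceq, hcsum⟩
    · rw [h0]; exact RRCFAux.zero_mem_Xi n
    · rw [hceq]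
      have h2 := RRCFAux.valid_sum_ge hcv hcne
      exact RRCFAux.mem_Xi_of_Theta (k := c.sum - 1) (by omega) (by omega)
        (RRCFAux.mem_Theta_of hcv hcne (by omega))
  have hconsL : IsConsecutive (Xi n) (RRCFAux.lo b) (rrcfVal b) := by
    refine ⟨hlomem, hxy.2.1, RRCFAux.lo_lt_val b hbv, ?_⟩
    rintro w hw ⟨hw1, hw2⟩
    rcases RRCFAux.Xi_elim hw with rfl | rfl | ⟨c, hcv, hcne, rfl, hc2, hcn⟩
    · exact absurd hw1 (not_lt.mpr (RRCFAux.lo_bounds b hbv).1)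
    · cases b with
      | nil => exact absurd rfl hbne
      | cons b₁ t => exact absurd hw2 (not_lt.mpr (RRCFAux.val_lt_one hbv).le)
    · obtain ⟨d, hd⟩ := RRCFAux.cylinder b c hbv hcv hbne hw1 hw2.le
      cases d with
      | nil =>
        rw [List.append_nil] at hd
        rw [← hd] at hw2
        exact absurd hw2 (lt_irrefl _)
      | cons d₁ d' =>
        have hcsum : c.sum = b.sum + (d₁ :: d').sum := by
          rw [← hd, List.sum_append]
        have hd2 : 2 ≤ (d₁ :: d').sum :=
          RRCFAux.valid_sum_ge
            (fun u hu => hcv u (by rw [← hd]; exact List.mem_append_right _ hu)) (by simp)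
        omega
  have hxeq : x = RRCFAux.lo b := RRCFAux.consec_left_unique hxy hconsL
  -- the right neighbour of `y` in `Ξ_n` is `rrcfVal b.dropLast`
  have hb'v : RRCFAux.Valid b.dropLast := hbv.dropLast
  have ha2 : 2 ≤ b.getLast hbne := hbv _ (List.getLast_mem hbne)
  have hsplit : b.dropLast ++ [b.getLast hbne] = b := List.dropLast_append_getLast hbne
  have hsum' : b.dropLast.sum + b.getLast hbne = n + 1 := by
    conv_rhs => rw [← hbsum, ← hsplit]
    rw [List.sum_append, List.sum_singleton]
  have hzimem : rrcfVal b.dropLast ∈ Xi n := by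
    rcases eq_or_ne b.dropLast [] with h | h
    · rw [h, RRCFAux.rrcfVal_nil]; exact RRCFAux.one_mem_Xi n
    · have h2 := RRCFAux.valid_sum_ge hb'v h
      exact RRCFAux.mem_Xi_of_Theta (k := b.dropLast.sum - 1) (by omega) (by omega)
        (RRCFAux.mem_Theta_of hb'v h (by omega))
  have hconsR : IsConsecutive (Xi n) (rrcfVal b) (rrcfVal b.dropLast) := by
    refine ⟨hxy.2.1, hzimem, RRCFAux.val_lt_val_dropLast b hbv hbne, ?_⟩
    rintro w hw ⟨hw1, hw2⟩
    rcases RRCFAux.Xi_elim hw with rfl | rfl | ⟨c, hcv, hcne, rfl, hc2, hcn⟩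
    · exact absurd hw1 (not_lt.mpr (RRCFAux.val_bounds b hbv).1.le)
    · exact absurd hw2 (not_lt.mpr (RRCFAux.val_bounds b.dropLast hb'v).2)
    · have := RRCFAux.right_sum b c hbv hcv hbne hw1 hw2
      omega
  have hzeq : z = rrcfVal b.dropLast := RRCFAux.consec_right_unique hyz hconsR
  subst hxeq
  subst hzeq
  -- numerators and denominators
  have hyval : rrcfVal b
      = ((RRCFAux.NDp (1, 1) b).1 : ℚ) / ((RRCFAux.NDp (1, 1) b).2 : ℚ) := by
    have h := RRCFAux.NDp_spec (p := (1, 1)) (by norm_num) b hbv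
    norm_num at h
    rw [RRCFAux.G_one b]
    exact h
  have hxval : RRCFAux.lo b
      = ((RRCFAux.NDp (0, 1) b).1 : ℚ) / ((RRCFAux.NDp (0, 1) b).2 : ℚ) := by
    have h := RRCFAux.NDp_spec (p := (0, 1)) (by norm_num) b hbv
    norm_num at h
    rw [RRCFAux.G_zero b]
    exact h
  have hzval : rrcfVal b.dropLast
      = ((RRCFAux.NDp (1, 1) b.dropLast).1 : ℚ) / ((RRCFAux.NDp (1, 1) b.dropLast).2 : ℚ) := by
    have h := RRCFAux.NDp_spec (p := (1, 1)) (by norm_num) b.dropLast hb'v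
    norm_num at h
    rw [RRCFAux.G_one b.dropLast]
    exact h
  obtain ⟨hynum, hyden⟩ := RRCFAux.num_den_of
    (RRCFAux.NDp_coprime (by norm_num [Nat.Coprime]) b hbv)
    (RRCFAux.NDp_den_pos (by norm_num) b hbv) hyval
  obtain ⟨hxnum, hxden⟩ := RRCFAux.num_den_of
    (RRCFAux.NDp_coprime (by norm_num [Nat.Coprime]) b hbv)
    (RRCFAux.NDp_den_pos (by norm_num) b hbv) hxval
  obtain ⟨hznum, hzden⟩ := RRCFAux.num_den_of
    (RRCFAux.NDp_coprime (by norm_num [Nat.Coprime]) b.dropLast hb'v)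
    (RRCFAux.NDp_den_pos (by norm_num) b.dropLast hb'v) hzval
  constructor
  · -- left mediant
    have hM1 : rrcfVal (b ++ [2])
        = (((RRCFAux.NDp (0, 1) b).1 + (RRCFAux.NDp (1, 1) b).1 : ℕ) : ℚ)
          / (((RRCFAux.NDp (0, 1) b).2 + (RRCFAux.NDp (1, 1) b).2 : ℕ) : ℚ) := by
      rw [RRCFAux.G_append, RRCFAux.rrcfVal_two]
      have h := RRCFAux.NDp_spec (p := (1, 2)) (by norm_num) b hbv
      have hadd : RRCFAux.NDp (1, 2) b
          = ((RRCFAux.NDp (0, 1) b).1 + (RRCFAux.NDp (1, 1) b).1,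
             (RRCFAux.NDp (0, 1) b).2 + (RRCFAux.NDp (1, 1) b).2) :=
        RRCFAux.NDp_add (0, 1) (1, 1) b
      rw [hadd] at h
      exact h
    have hmed : mediant (RRCFAux.lo b) (rrcfVal b) = rrcfVal (b ++ [2]) := by
      rw [mediant, hxnum, hxden, hynum, hyden, hM1]
      push_cast
      ring
    rw [hmed]
    refine RRCFAux.mem_Theta_of ?_ (by simp) ?_
    · intro u hu
      rcases List.mem_append.mp hu with hu | hu
      · exact hbv u hu
      · simp at hu; omega
    · rw [List.sum_append, List.sum_singleton]; omega
  · -- right mediant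
    obtain ⟨a, ha⟩ : ∃ m, m = b.getLast hbne := ⟨_, rfl⟩
    rw [← ha] at ha2 hsplit hsum'
    have hNDb : RRCFAux.NDp (1, 1) b = RRCFAux.NDp (a - 1, a) b.dropLast := by
      conv_lhs => rw [← hsplit]
      rw [RRCFAux.NDp_append]
      congr 1
      show ((a - 2) * 1 + 1, (a - 1) * 1 + 1) = (a - 1, a)
      have h1 : (a - 2) * 1 + 1 = a - 1 := by omega
      have h2 : (a - 1) * 1 + 1 = a := by omega
      rw [h1, h2]
    have hM2 : rrcfVal (b.dropLast ++ [a + 1])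
        = (((RRCFAux.NDp (a - 1, a) b.dropLast).1 + (RRCFAux.NDp (1, 1) b.dropLast).1 : ℕ) : ℚ)
          / (((RRCFAux.NDp (a - 1, a) b.dropLast).2 + (RRCFAux.NDp (1, 1) b.dropLast).2 : ℕ) : ℚ) := by
      rw [RRCFAux.G_append, RRCFAux.rrcfVal_single_succ a (by omega)]
      have h := RRCFAux.NDp_spec (p := (a, a + 1)) (by simp) b.dropLast hb'v
      have hadd := RRCFAux.NDp_add (a - 1, a) (1, 1) b.dropLast
      have he : ((a - 1 : ℕ) + 1, a + 1) = (a, a + 1) := by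
        have h1 : a - 1 + 1 = a := by omega
        rw [h1]
      rw [he] at hadd
      rw [hadd] at h
      exact h
    have hmed : mediant (rrcfVal b) (rrcfVal b.dropLast) = rrcfVal (b.dropLast ++ [a + 1]) := by
      rw [mediant, hynum, hyden, hznum, hzden, hM2, hNDb]
      push_cast
      ring
    rw [hmed]
    refine RRCFAux.mem_Theta_of ?_ (by simp) ?_
    · intro u hu
      rcases List.mem_append.mp hu with hu | hu
      · exact hb'v u hu
      · simp at hu; omega
    · rw [List.sum_append, List.sum_singleton]; omega
end

section
/- Let x < y < z be three consecutive elements of Ξ_n with y ∈ Θ_n, and write y = [[1; b_1, …, b_s]]. Then the mediant x ⊕ y equals [[1; b_1, …, b_s, 2]] and the mediant y ⊕ z equals [[1; b_1, …, b_s + 1]]. -/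
open Set Filter

namespace MedAux

def mat : List ℕ → ℤ × ℤ × ℤ × ℤ
  | [] => (1, 0, 0, 1)
  | c :: t =>
    ((c : ℤ) * (mat t).1 - (mat t).2.2.1, (c : ℤ) * (mat t).2.1 - (mat t).2.2.2,
      (mat t).1, (mat t).2.1)

def mA (b : List ℕ) : ℤ := (mat b).1
def mB (b : List ℕ) : ℤ := (mat b).2.1
def mC (b : List ℕ) : ℤ := (mat b).2.2.1
def mD (b : List ℕ) : ℤ := (mat b).2.2.2

@[simp] lemma mA_nil : mA [] = 1 := rfl
@[simp] lemma mB_nil : mB [] = 0 := rfl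
@[simp] lemma mC_nil : mC [] = 0 := rfl
@[simp] lemma mD_nil : mD [] = 1 := rfl
lemma mA_cons (c : ℕ) (t : List ℕ) : mA (c :: t) = c * mA t - mC t := rfl
lemma mB_cons (c : ℕ) (t : List ℕ) : mB (c :: t) = c * mB t - mD t := rfl
lemma mC_cons (c : ℕ) (t : List ℕ) : mC (c :: t) = mA t := rfl
lemma mD_cons (c : ℕ) (t : List ℕ) : mD (c :: t) = mB t := rfl

def V (b : List ℕ) : Prop := ∀ e ∈ b, 2 ≤ e

lemma V_tail {c : ℕ} {t : List ℕ} (h : V (c :: t)) : V t :=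
  fun e he => h e (List.mem_cons_of_mem _ he)

lemma V_head {c : ℕ} {t : List ℕ} (h : V (c :: t)) : 2 ≤ c :=
  h c List.mem_cons_self

lemma mC_bounds : ∀ b : List ℕ, V b → 0 ≤ mC b ∧ mC b < mA b
  | [], _ => by simp
  | c :: t, h => by
    obtain ⟨h1, h2⟩ := mC_bounds t (V_tail h)
    have hc : (2 : ℤ) ≤ (c : ℤ) := by exact_mod_cast V_head h
    refine ⟨by rw [mC_cons]; linarith, ?_⟩
    rw [mA_cons, mC_cons]
    nlinarith

lemma mA_pos (b : List ℕ) (h : V b) : 0 < mA b :=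
  lt_of_le_of_lt (mC_bounds b h).1 (mC_bounds b h).2

lemma mC_pos {c : ℕ} {t : List ℕ} (h : V (c :: t)) : 0 < mC (c :: t) := by
  rw [mC_cons]; exact mA_pos t (V_tail h)

lemma det : ∀ b : List ℕ, mA b * mD b - mB b * mC b = 1
  | [] => by simp
  | c :: t => by
    have ih := det t
    simp only [mA_cons, mB_cons, mC_cons, mD_cons]
    linear_combination ih

lemma rrTail_eq : ∀ b : List ℕ, V b → rrTail b = (mA b : ℚ) / (mC b)
  | [], _ => by simp [rrTail]
  | c :: t, h => by
    have ih := rrTail_eq t (V_tail h)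
    have hA : (0 : ℤ) < mA t := mA_pos t (V_tail h)
    have hA0 : ((mA t : ℤ) : ℚ) ≠ 0 := by exact_mod_cast hA.ne'
    show (c : ℚ) - 1 / rrTail t = _
    rw [ih, one_div_div, mA_cons, mC_cons]
    field_simp
    push_cast <;> ring

lemma rrcfVal_eq (b : List ℕ) (h : V b) :
    rrcfVal b = ((mA b - mC b : ℤ) : ℚ) / ((mA b : ℤ) : ℚ) := by
  have hA : (0 : ℤ) < mA b := mA_pos b h
  have hA0 : ((mA b : ℤ) : ℚ) ≠ 0 := by exact_mod_cast hA.ne'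
  rw [rrcfVal, rrTail_eq b h, one_div_div]
  field_simp
  push_cast <;> ring

lemma num_den (b : List ℕ) (h : V b) :
    (rrcfVal b).num = mA b - mC b ∧ ((rrcfVal b).den : ℤ) = mA b := by
  have hA : (0 : ℤ) < mA b := mA_pos b h
  have h1 : IsCoprime (mC b) (mA b) := ⟨-(mB b), mD b, by linear_combination det b⟩
  have h2 : IsCoprime (mA b - mC b) (mA b) := by
    have h3 := (h1.neg_left).add_mul_left_left 1
    rwa [show -mC b + mA b * 1 = mA b - mC b by ring] at h3
  have hcop : Nat.Coprime (mA b - mC b).natAbs (mA b).natAbs :=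
    Int.isCoprime_iff_gcd_eq_one.mp h2
  rw [rrcfVal_eq b h]
  exact ⟨Rat.num_div_eq_of_coprime hA hcop, Rat.den_div_eq_of_coprime hA hcop⟩


lemma mat_append : ∀ (b : List ℕ) (c : ℕ),
    mA (b ++ [c]) = c * mA b + mB b ∧ mB (b ++ [c]) = -mA b ∧
      mC (b ++ [c]) = c * mC b + mD b ∧ mD (b ++ [c]) = -mC b
  | [], c => by
    refine ⟨?_, ?_, ?_, ?_⟩ <;>
      simp [mA_cons, mB_cons, mC_cons, mD_cons]
  | x :: b, c => by
    obtain ⟨h1, h2, h3, h4⟩ := mat_append b c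
    rw [List.cons_append]
    refine ⟨?_, ?_, ?_, ?_⟩ <;>
      simp only [mA_cons, mB_cons, mC_cons, mD_cons, h1, h2, h3, h4] <;> ring

lemma colsum0 : ∀ m : ℕ,
    mA (List.replicate m 2) + mB (List.replicate m 2) = 1 ∧
      mC (List.replicate m 2) + mD (List.replicate m 2) = 1
  | 0 => by simp
  | m + 1 => by
    obtain ⟨h1, h2⟩ := colsum0 m
    rw [List.replicate_succ']
    obtain ⟨g1, g2, g3, g4⟩ := mat_append (List.replicate m 2) 2
    rw [g1, g2, g3, g4]
    constructor <;> push_cast <;> linarith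

lemma colsum (q : List ℕ) (a : ℕ) : ∀ m : ℕ,
    mA (q ++ (a + 1) :: List.replicate m 2) + mB (q ++ (a + 1) :: List.replicate m 2)
        = mA (q ++ [a]) ∧
      mC (q ++ (a + 1) :: List.replicate m 2) + mD (q ++ (a + 1) :: List.replicate m 2)
        = mC (q ++ [a])
  | 0 => by
    obtain ⟨g1, g2, g3, g4⟩ := mat_append q (a + 1)
    obtain ⟨f1, f2, f3, f4⟩ := mat_append q a
    rw [show q ++ [a+1] = q ++ (a+1) :: List.replicate 0 2 from rfl] at g1 g2 g3 g4
    rw [g1, g2, g3, g4, f1, f3]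
    constructor <;> push_cast <;> ring
  | m + 1 => by
    obtain ⟨h1, h2⟩ := colsum q a m
    have hsh : q ++ (a + 1) :: List.replicate (m + 1) 2
        = (q ++ (a + 1) :: List.replicate m 2) ++ [2] := by
      rw [List.replicate_succ']
      simp [List.append_assoc]
    rw [hsh]
    obtain ⟨g1, g2, g3, g4⟩ := mat_append (q ++ (a + 1) :: List.replicate m 2) 2
    rw [g1, g2, g3, g4]
    constructor <;> push_cast <;> linarith


@[simp] lemma rrTail_nil : rrTail [] = 0 := rfl
lemma rrTail_cons (c : ℕ) (t : List ℕ) : rrTail (c :: t) = (c : ℚ) - 1 / rrTail t := rfl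
@[simp] lemma rrcfVal_nil : rrcfVal [] = 1 := by simp [rrcfVal]

lemma one_lt_rrTail : ∀ b : List ℕ, V b → b ≠ [] → 1 < rrTail b
  | [], _, h => absurd rfl h
  | c :: t, h, _ => by
    have hc : (2 : ℚ) ≤ (c : ℚ) := by exact_mod_cast V_head h
    rw [rrTail_cons]
    rcases eq_or_ne t [] with rfl | ht
    · simp only [rrTail_nil, div_zero, sub_zero]
      linarith
    · have h1 := one_lt_rrTail t (V_tail h) ht
      have h2 : 0 < 1 / rrTail t := by positivity
      have h3 : 1 / rrTail t < 1 := by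
        rw [div_lt_one (by linarith)]; linarith
      linarith

lemma inv_tail_bounds (b : List ℕ) (h : V b) : 0 ≤ 1 / rrTail b ∧ 1 / rrTail b < 1 := by
  rcases eq_or_ne b [] with rfl | hb
  · simp
  · have h1 := one_lt_rrTail b h hb
    have h2 : 0 < 1 / rrTail b := by positivity
    exact ⟨h2.le, by rw [div_lt_one (by linarith)]; linarith⟩

lemma inv_tail_pos (b : List ℕ) (h : V b) (hb : b ≠ []) : 0 < 1 / rrTail b := by
  have h1 := one_lt_rrTail b h hb
  positivity

def Ord : List ℕ → List ℕ → Prop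
  | [], [] => False
  | _ :: _, [] => True
  | [], _ :: _ => False
  | i :: t, j :: u => i < j ∨ (i = j ∧ Ord t u)

lemma ord_nil : ∀ t : List ℕ, ¬ Ord [] t
  | [] => not_false
  | _ :: _ => not_false

lemma char : ∀ c e : List ℕ, V c → V e → (rrcfVal c < rrcfVal e ↔ Ord c e)
  | [], [], _, _ => by simp [Ord]
  | i :: t, [], hc, _ => by
    have h0 := inv_tail_pos (i :: t) hc (by simp)
    simp only [Ord, iff_true, rrcfVal, rrTail_nil, div_zero, sub_zero]
    linarith
  | [], j :: u, _, he => by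
    have h0 := inv_tail_pos (j :: u) he (by simp)
    refine iff_of_false ?_ (ord_nil _)
    simp only [rrcfVal, rrTail_nil, div_zero, sub_zero, not_lt]
    linarith
  | i :: t, j :: u, hc, he => by
    have hVt := V_tail hc
    have hVu := V_tail he
    have Tc := one_lt_rrTail (i :: t) hc (by simp)
    have Te := one_lt_rrTail (j :: u) he (by simp)
    obtain ⟨It1, It2⟩ := inv_tail_bounds t hVt
    obtain ⟨Iu1, Iu2⟩ := inv_tail_bounds u hVu
    have step1 : rrcfVal (i :: t) < rrcfVal (j :: u) ↔ rrTail (i :: t) < rrTail (j :: u) := by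
      unfold rrcfVal
      constructor
      · intro h
        have h' : 1 / rrTail (j :: u) < 1 / rrTail (i :: t) := by linarith
        exact lt_of_one_div_lt_one_div (by linarith) h'
      · intro h
        have h' : 1 / rrTail (j :: u) < 1 / rrTail (i :: t) :=
          one_div_lt_one_div_of_lt (by linarith) h
        linarith
    rw [step1, rrTail_cons, rrTail_cons]
    rcases lt_trichotomy i j with hij | rfl | hij
    · have hij' : (i : ℚ) + 1 ≤ (j : ℚ) := by exact_mod_cast hij
      refine iff_of_true (by linarith) (Or.inl hij)
    · have ih := char t u hVt hVu
      constructor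
      · intro h
        refine Or.inr ⟨rfl, ih.mp ?_⟩
        unfold rrcfVal
        linarith
      · rintro (h | ⟨-, h⟩)
        · exact absurd h (lt_irrefl _)
        · have := ih.mpr h
          unfold rrcfVal at this
          linarith
    · have hij' : (j : ℚ) + 1 ≤ (i : ℚ) := by exact_mod_cast hij
      refine iff_of_false (by linarith) ?_
      rintro (h | ⟨rfl, -⟩)
      · omega
      · omega

lemma ord_tri : ∀ c e : List ℕ, c ≠ e → Ord c e ∨ Ord e c
  | [], [], h => absurd rfl h
  | _ :: _, [], _ => Or.inl trivial
  | [], _ :: _, _ => Or.inr trivial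
  | i :: t, j :: u, h => by
    rcases lt_trichotomy i j with hij | rfl | hij
    · exact Or.inl (Or.inl hij)
    · have ht : t ≠ u := fun ht => h (by rw [ht])
      rcases ord_tri t u ht with h' | h'
      · exact Or.inl (Or.inr ⟨rfl, h'⟩)
      · exact Or.inr (Or.inr ⟨rfl, h'⟩)
    · exact Or.inr (Or.inl hij)

lemma val_inj {c e : List ℕ} (hc : V c) (he : V e) (h : rrcfVal c = rrcfVal e) : c = e := by
  by_contra hne
  rcases ord_tri c e hne with h' | h'
  · exact absurd h (ne_of_lt ((char c e hc he).mpr h'))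
  · exact absurd h.symm (ne_of_lt ((char e c he hc).mpr h'))

lemma ord_append : ∀ (e d : List ℕ), d ≠ [] → Ord (e ++ d) e
  | [], [], h => absurd rfl h
  | [], _ :: _, _ => trivial
  | x :: e, d, h => Or.inr ⟨rfl, ord_append e d h⟩

lemma ord_prefix_lt : ∀ (q : List ℕ) (i j : ℕ) (t u : List ℕ), i < j →
    Ord (q ++ i :: t) (q ++ j :: u)
  | [], i, j, t, u, h => Or.inl h
  | x :: q, i, j, t, u, h => Or.inr ⟨rfl, ord_prefix_lt q i j t u h⟩

lemma gap_right : ∀ (q : List ℕ) (g : ℕ) (c : List ℕ),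
    Ord (q ++ [g]) c → Ord c q → q.sum + (g + 1) ≤ c.sum
  | [], g, [], h1, h2 => absurd h2 (ord_nil [])
  | [], g, c1 :: t, h1, h2 => by
    rcases h1 with h | ⟨rfl, h⟩
    · simp only [List.sum_cons, List.sum_nil]
      omega
    · exact absurd h (ord_nil t)
  | x :: q, g, [], h1, h2 => absurd h2 (ord_nil _)
  | x :: q, g, c1 :: t, h1, h2 => by
    rw [List.cons_append] at h1
    rcases h1 with h | ⟨rfl, h⟩
    · rcases h2 with h' | ⟨rfl, h'⟩ <;> omega
    · rcases h2 with h' | ⟨-, h'⟩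
      · omega
      · have := gap_right q g t h h'
        simp only [List.sum_cons]
        omega

lemma ord_replicate_sum : ∀ (m : ℕ) (c : List ℕ), V c →
    Ord c (List.replicate m 2) → 2 * m + 2 ≤ c.sum
  | 0, [], _, h => absurd h (ord_nil [])
  | 0, c1 :: t, hV, _ => by
    have := V_head hV
    simp only [List.sum_cons]
    omega
  | m + 1, [], _, h => absurd h (ord_nil _)
  | m + 1, c1 :: t, hV, h => by
    rw [List.replicate_succ] at h
    rcases h with h | ⟨rfl, h⟩
    · have := V_head hV
      omega
    · have := ord_replicate_sum m t (V_tail hV) h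
      simp only [List.sum_cons]
      omega

lemma gap_left : ∀ (q : List ℕ) (a m : ℕ) (c : List ℕ), V c →
    Ord (q ++ [a]) c → Ord c (q ++ (a + 1) :: List.replicate m 2) →
    q.sum + a + 2 * m + 3 ≤ c.sum
  | q, a, m, [], _, h1, h2 => by
    rcases q with - | ⟨x, q⟩ <;> exact absurd h2 (ord_nil _)
  | [], a, m, c1 :: t, hV, h1, h2 => by
    rcases h1 with h | ⟨rfl, h⟩
    · rcases h2 with h' | ⟨rfl, h'⟩
      · omega
      · have := ord_replicate_sum m t (V_tail hV) h'
        simp only [List.sum_cons, List.sum_nil]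
        omega
    · exact absurd h (ord_nil t)
  | x :: q, a, m, c1 :: t, hV, h1, h2 => by
    rw [List.cons_append] at h1 h2
    rcases h1 with h | ⟨rfl, h⟩
    · rcases h2 with h' | ⟨rfl, h'⟩ <;> omega
    · rcases h2 with h' | ⟨-, h'⟩
      · omega
      · have := gap_left q a m t (V_tail hV) h h'
        simp only [List.sum_cons]
        omega


lemma sum_ge_two {c : List ℕ} (hV : V c) (hne : c ≠ []) : 2 ≤ c.sum := by
  rcases c with - | ⟨c1, t⟩
  · exact absurd rfl hne
  · have := V_head hV
    simp only [List.sum_cons]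
    omega

lemma rrcf_mem_Ioo {b : List ℕ} (hV : V b) (hne : b ≠ []) : rrcfVal b ∈ Set.Ioo (0 : ℚ) 1 := by
  obtain ⟨h0, h1⟩ := mC_bounds b hV
  have hCpos : 0 < mC b := by
    rcases b with - | ⟨c, t⟩
    · exact absurd rfl hne
    · exact mC_pos hV
  have hA : (0 : ℤ) < mA b := mA_pos b hV
  rw [rrcfVal_eq b hV]
  constructor
  · apply div_pos
    · exact_mod_cast (by omega : (0:ℤ) < mA b - mC b)
    · exact_mod_cast hA
  · rw [div_lt_one (by exact_mod_cast hA)]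
    exact_mod_cast (by omega : mA b - mC b < mA b)

lemma rrcfVal_le_one {b : List ℕ} (hV : V b) : rrcfVal b ≤ 1 := by
  rcases eq_or_ne b [] with rfl | h
  · simp
  · exact (rrcf_mem_Ioo hV h).2.le

lemma shuffle (q : List ℕ) (a m : ℕ) :
    q ++ a :: List.replicate (m + 1) 2 = (q ++ a :: List.replicate m 2) ++ [2] := by
  rw [List.replicate_succ']
  simp [List.append_assoc]

lemma decomp (b : List ℕ) (hV : V b) (hne : b ≠ []) :
    (∃ m, b = List.replicate (m + 1) 2) ∨
      (∃ q a m, V q ∧ 2 ≤ a ∧ b = q ++ (a + 1) :: List.replicate m 2) := by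
  induction b using List.reverseRecOn with
  | nil => exact absurd rfl hne
  | append_singleton e c ih =>
    have hc : 2 ≤ c := hV c (by simp)
    have hVe : V e := fun x hx => hV x (by simp [hx])
    rcases hc.eq_or_lt with hc2 | hc3
    · obtain rfl : c = 2 := hc2.symm
      rcases eq_or_ne e [] with rfl | he
      · exact Or.inl ⟨0, by simp⟩
      · rcases ih hVe he with ⟨m, rfl⟩ | ⟨q, a, m, hq, ha, rfl⟩
        · exact Or.inl ⟨m + 1, by simp [List.replicate_succ', List.append_assoc]⟩
        · exact Or.inr ⟨q, a, m + 1, hq, ha, by rw [shuffle]⟩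
    · refine Or.inr ⟨e, c - 1, 0, hVe, by omega, ?_⟩
      simp only [List.replicate_zero]
      have : c - 1 + 1 = c := by omega
      rw [this]


lemma zero_mem_Xi (n : ℕ) : (0 : ℚ) ∈ Xi n := Set.mem_union_left _ (by simp)
lemma one_mem_Xi (n : ℕ) : (1 : ℚ) ∈ Xi n := Set.mem_union_left _ (by simp)

lemma mem_Xi_val {n : ℕ} {c : List ℕ} (hV : V c) (hne : c ≠ []) (hs : c.sum ≤ n + 1) :
    rrcfVal c ∈ Xi n := by
  have h2 := sum_ge_two hV hne
  refine Set.mem_union_right _ (Set.mem_iUnion₂.mpr ⟨c.sum - 1, ?_, ?_⟩)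
  · rw [Finset.mem_Icc]; omega
  · exact ⟨rrcf_mem_Ioo hV hne, c, ⟨hV, rfl⟩, by omega⟩

lemma mem_Xi_elim {n : ℕ} {w : ℚ} (hw : w ∈ Xi n) :
    w = 0 ∨ w = 1 ∨ ∃ c : List ℕ, V c ∧ c ≠ [] ∧ c.sum ≤ n + 1 ∧ w = rrcfVal c := by
  rcases hw with hw | hw
  · simp only [Set.mem_insert_iff, Set.mem_singleton_iff] at hw
    rcases hw with rfl | rfl
    · exact Or.inl rfl
    · exact Or.inr (Or.inl rfl)
  · rw [Set.mem_iUnion₂] at hw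
    obtain ⟨k, hk, hIoo, c, ⟨hVc, hval⟩, hsum⟩ := hw
    rw [Finset.mem_Icc] at hk
    refine Or.inr (Or.inr ⟨c, hVc, ?_, by omega, hval⟩)
    intro h
    rw [h] at hsum
    simp at hsum

lemma mediant_eq {u v : ℚ} {ct : List ℕ} (hVt : V ct) (nu du nv dv : ℤ)
    (hnu : u.num = nu) (hdu : ((u.den : ℕ) : ℤ) = du)
    (hnv : v.num = nv) (hdv : ((v.den : ℕ) : ℤ) = dv)
    (hA : mA ct = du + dv) (hC : mA ct - mC ct = nu + nv) :
    mediant u v = rrcfVal ct := by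
  have h1 : ((u.den : ℕ) : ℚ) = ((du : ℤ) : ℚ) := by exact_mod_cast congrArg (fun z : ℤ => (z : ℚ)) hdu
  have h2 : ((v.den : ℕ) : ℚ) = ((dv : ℤ) : ℚ) := by exact_mod_cast congrArg (fun z : ℤ => (z : ℚ)) hdv
  rw [mediant, rrcfVal_eq ct hVt, hnu, hnv, hC, hA]
  congr 1
  push_cast [h1, h2]
  ring


end MedAux

/-- if `x < y < z` are consecutive in `Ξ_n` with
`y = [[1; b_1, …, b_s]] ∈ Θ_n`, then `x ⊕ y = [[1; b_1, …, b_s, 2]]` and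
`y ⊕ z = [[1; b_1, …, b_s + 1]]`. -/
theorem mediant_rrcf_formula
    (n : ℕ) (x y z : ℚ)
    (hxy : IsConsecutive (Xi n) x y) (hyz : IsConsecutive (Xi n) y z)
    (hy : y ∈ Theta n)
    (b : List ℕ) (hbne : b ≠ []) (hb : IsRRCF y b) :
    mediant x y = rrcfVal (b ++ [2]) ∧
      mediant y z = rrcfVal (b.dropLast ++ [b.getLast hbne + 1]) := by
  obtain ⟨hxX, hyX, hxlt, hxno⟩ := hxy
  obtain ⟨hyX', hzX, hzlt, hzno⟩ := hyz
  obtain ⟨hV, hyval⟩ := hb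
  obtain ⟨hyIoo, b₂, hb₂, hsum₂⟩ := hy
  have hbsum : b.sum = n + 1 := by
    have hb2 : b₂ = b := MedAux.val_inj hb₂.1 hV (hb₂.2.symm.trans hyval)
    rw [← hb2]; exact hsum₂
  have hVd : MedAux.V b.dropLast := fun e he => hV e (List.dropLast_subset _ he)
  have hg2 : 2 ≤ b.getLast hbne := hV _ (List.getLast_mem hbne)
  have hsplit : b.dropLast ++ [b.getLast hbne] = b := List.dropLast_append_getLast hbne
  have hdsum : b.dropLast.sum + b.getLast hbne = b.sum := by
    conv_rhs => rw [← hsplit]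
    simp
  have hynum := (MedAux.num_den b hV).1
  have hyden := (MedAux.num_den b hV).2
  -- identify the right neighbor
  have hordbd : MedAux.Ord b b.dropLast := by
    have h := MedAux.ord_append b.dropLast [b.getLast hbne] (by simp)
    rwa [hsplit] at h
  have hyltd : y < rrcfVal b.dropLast := by
    rw [hyval]
    exact (MedAux.char b b.dropLast hV hVd).mpr hordbd
  have hdmem : rrcfVal b.dropLast ∈ Xi n := by
    rcases eq_or_ne b.dropLast [] with hd | hd
    · rw [hd]; simpa using MedAux.one_mem_Xi n
    · have hds2 := MedAux.sum_ge_two hVd hd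
      exact MedAux.mem_Xi_val hVd hd (by omega)
  have hz : z = rrcfVal b.dropLast := by
    have le1 : z ≤ rrcfVal b.dropLast := by
      by_contra hcon
      push_neg at hcon
      exact hzno _ hdmem ⟨hyltd, hcon⟩
    have le2 : rrcfVal b.dropLast ≤ z := by
      by_contra hcon
      push_neg at hcon
      rcases MedAux.mem_Xi_elim hzX with rfl | rfl | ⟨c, hVc, hcne, hcsum, rfl⟩
      · exact (lt_asymm hyIoo.1) hzlt
      · exact absurd hcon (not_lt.mpr (MedAux.rrcfVal_le_one hVd))
      · have h1 : MedAux.Ord b c := (MedAux.char b c hV hVc).mp (by rw [← hyval]; exact hzlt)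
        have h2 : MedAux.Ord c b.dropLast := (MedAux.char c b.dropLast hVc hVd).mp hcon
        have h3 := MedAux.gap_right b.dropLast (b.getLast hbne) c (by rw [hsplit]; exact h1) h2
        omega
    linarith
  -- the second mediant formula
  have med_right : mediant y z = rrcfVal (b.dropLast ++ [b.getLast hbne + 1]) := by
    have hVt : MedAux.V (b.dropLast ++ [b.getLast hbne + 1]) := by
      intro e he
      rcases List.mem_append.mp he with h | h
      · exact hVd e h
      · simp only [List.mem_singleton] at h; omega
    have hznum := (MedAux.num_den b.dropLast hVd).1
    have hzden := (MedAux.num_den b.dropLast hVd).2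
    obtain ⟨g1, -, g3, -⟩ := MedAux.mat_append b.dropLast (b.getLast hbne + 1)
    obtain ⟨f1, -, f3, -⟩ := MedAux.mat_append b.dropLast (b.getLast hbne)
    rw [hsplit] at f1 f3
    refine MedAux.mediant_eq hVt (MedAux.mA b - MedAux.mC b) (MedAux.mA b)
      (MedAux.mA b.dropLast - MedAux.mC b.dropLast) (MedAux.mA b.dropLast)
      (by rw [hyval]; exact hynum) (by rw [hyval]; exact hyden)
      (by rw [hz]; exact hznum) (by rw [hz]; exact hzden) ?_ ?_
    · rw [g1, f1]; push_cast; ring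
    · rw [g1, g3, f1, f3]; push_cast; ring
  have hVt2 : MedAux.V (b ++ [2]) := by
    intro e he
    rcases List.mem_append.mp he with h | h
    · exact hV e h
    · simp only [List.mem_singleton] at h; omega
  obtain ⟨g1, -, g3, -⟩ := MedAux.mat_append b 2
  rcases MedAux.decomp b hV hbne with ⟨m, hrep⟩ | ⟨q, a, m, hVq, ha2, hqam⟩
  · -- b consists only of 2's : left neighbor is 0
    have hx0 : x = 0 := by
      rcases MedAux.mem_Xi_elim hxX with rfl | rfl | ⟨c, hVc, hcne, hcsum, rfl⟩
      · rfl
      · exact absurd hxlt (lt_asymm hyIoo.2)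
      · exfalso
        have h1 : MedAux.Ord c b := (MedAux.char c b hVc hV).mp (by rw [← hyval]; exact hxlt)
        have h2 := MedAux.ord_replicate_sum (m + 1) c hVc (by rw [← hrep]; exact h1)
        have h3 : b.sum = (m + 1) * 2 := by
          rw [hrep]; simp [List.sum_replicate, smul_eq_mul]
        omega
    have hcs := MedAux.colsum0 (m + 1)
    rw [← hrep] at hcs
    refine ⟨MedAux.mediant_eq hVt2 0 1 (MedAux.mA b - MedAux.mC b) (MedAux.mA b)
      (by rw [hx0]; simp) (by rw [hx0]; simp)
      (by rw [hyval]; exact hynum) (by rw [hyval]; exact hyden) ?_ ?_, med_right⟩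
    · rw [g1]; push_cast; linarith [hcs.1]
    · rw [g1, g3]; push_cast; linarith [hcs.1, hcs.2]
  · -- b = q ++ (a+1) :: 2^m with a ≥ 2 : left neighbor is rrcfVal (q ++ [a])
    have hVp : MedAux.V (q ++ [a]) := by
      intro e he
      rcases List.mem_append.mp he with h | h
      · exact hVq e h
      · simp only [List.mem_singleton] at h; omega
    have hpne : (q ++ [a]) ≠ [] := by simp
    have hpsum : (q ++ [a]).sum = q.sum + a := by simp
    have hqsum : b.sum = q.sum + (a + 1) + 2 * m := by
      rw [hqam]
      simp only [List.sum_append, List.sum_cons, List.sum_replicate, smul_eq_mul]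
      omega
    have hordpb : MedAux.Ord (q ++ [a]) b := by
      rw [hqam]
      exact MedAux.ord_prefix_lt q a (a + 1) [] (List.replicate m 2) (by omega)
    have hpy : rrcfVal (q ++ [a]) < y := by
      rw [hyval]
      exact (MedAux.char _ _ hVp hV).mpr hordpb
    have hpmem : rrcfVal (q ++ [a]) ∈ Xi n := MedAux.mem_Xi_val hVp hpne (by omega)
    have hx0 : x = rrcfVal (q ++ [a]) := by
      have le2 : rrcfVal (q ++ [a]) ≤ x := by
        by_contra hcon
        push_neg at hcon
        exact hxno _ hpmem ⟨hcon, hpy⟩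
      have le1 : x ≤ rrcfVal (q ++ [a]) := by
        by_contra hcon
        push_neg at hcon
        rcases MedAux.mem_Xi_elim hxX with rfl | rfl | ⟨c, hVc, hcne, hcsum, rfl⟩
        · exact absurd hcon (not_lt.mpr (MedAux.rrcf_mem_Ioo hVp hpne).1.le)
        · exact absurd hxlt (lt_asymm hyIoo.2)
        · have h1 : MedAux.Ord (q ++ [a]) c := (MedAux.char _ _ hVp hVc).mp hcon
          have h2 : MedAux.Ord c b := (MedAux.char c b hVc hV).mp (by rw [← hyval]; exact hxlt)
          rw [hqam] at h2
          have h3 := MedAux.gap_left q a m c hVc h1 h2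
          omega
      linarith
    have hcs := MedAux.colsum q a m
    rw [← hqam] at hcs
    have hxnum := (MedAux.num_den (q ++ [a]) hVp).1
    have hxden := (MedAux.num_den (q ++ [a]) hVp).2
    refine ⟨MedAux.mediant_eq hVt2 (MedAux.mA (q ++ [a]) - MedAux.mC (q ++ [a]))
      (MedAux.mA (q ++ [a])) (MedAux.mA b - MedAux.mC b) (MedAux.mA b)
      (by rw [hx0]; exact hxnum) (by rw [hx0]; exact hxden)
      (by rw [hyval]; exact hynum) (by rw [hyval]; exact hyden) ?_ ?_, med_right⟩
    · rw [g1]; push_cast; linarith [hcs.1]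
    · rw [g1, g3]; push_cast; linarith [hcs.1, hcs.2]
end

section
/- Let x < y be two consecutive elements of Ξ_n (n ≥ 1) and suppose the mediant x ⊕ y belongs to Θ_k. Then for every m ≥ k, #{ ξ ∈ Ξ_m : x < ξ ≤ y } = F_{m−k+3}. -/
open Set Filter

-- entries all ≥ 2
def Ent (b : List ℕ) : Prop := ∀ x ∈ b, 2 ≤ x

def pstep (c : ℕ) (pq : ℤ × ℤ) : ℤ × ℤ :=
  (pq.1 + ((c : ℤ) - 2) * pq.2, pq.1 + ((c : ℤ) - 1) * pq.2)

def Zp (b : List ℕ) : ℤ × ℤ := b.foldr pstep (1, 1)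
def Up (b : List ℕ) : ℤ × ℤ := b.foldr pstep (0, 1)

def lq (b : List ℕ) : ℚ := ((Up b).1 : ℚ) / ((Up b).2 : ℚ)
def rq (b : List ℕ) : ℚ := rrcfVal b.dropLast

lemma Zp_nil : Zp [] = (1, 1) := rfl
lemma Up_nil : Up [] = (0, 1) := rfl
lemma Zp_cons (c t) : Zp (c :: t) = pstep c (Zp t) := rfl
lemma Up_cons (c t) : Up (c :: t) = pstep c (Up t) := rfl

lemma ent_cons {c t} (h : Ent (c :: t)) : 2 ≤ c ∧ Ent t :=
  ⟨h c List.mem_cons_self, fun x hx => h x (List.mem_cons_of_mem _ hx)⟩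

lemma L1 (b : List ℕ) (hb : Ent b) :
    0 ≤ (Up b).1 ∧ 1 ≤ (Up b).2 ∧ (Up b).1 < (Up b).2 ∧
    1 ≤ (Zp b).1 ∧ (Zp b).1 ≤ (Zp b).2 ∧ (b ≠ [] → (Zp b).1 < (Zp b).2) := by
  induction b with
  | nil => simp [Zp_nil, Up_nil]
  | cons c t ih =>
    obtain ⟨hc, ht⟩ := ent_cons hb
    obtain ⟨h1, h2, h3, h4, h5, _⟩ := ih ht
    have hc2 : (2 : ℤ) ≤ (c : ℤ) := by exact_mod_cast hc
    refine ⟨?_, ?_, ?_, ?_, ?_, fun _ => ?_⟩ <;>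
      simp only [Zp_cons, Up_cons, pstep] <;> nlinarith

lemma detZU (b : List ℕ) : (Zp b).1 * (Up b).2 - (Up b).1 * (Zp b).2 = 1 := by
  induction b with
  | nil => simp [Zp_nil, Up_nil]
  | cons c t ih =>
    simp only [Zp_cons, Up_cons, pstep]
    nlinarith [ih]

lemma pstep_add (c : ℕ) (x y : ℤ × ℤ) : pstep c (x + y) = pstep c x + pstep c y := by
  simp [pstep, Prod.ext_iff]; constructor <;> ring

lemma Zp_eq (b : List ℕ) (hb : b ≠ []) : Zp b = Up b + Zp b.dropLast := by
  induction b with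
  | nil => exact absurd rfl hb
  | cons c t ih =>
    cases t with
    | nil =>
      simp only [Zp_cons, Up_cons, List.dropLast_singleton, Zp_nil, Up_nil, pstep, Prod.mk_add_mk,
        Prod.mk.injEq]
      exact ⟨by ring, by ring⟩
    | cons d s =>
      have h := ih (by simp)
      have e1 : Zp (c :: d :: s) = pstep c (Zp (d :: s)) := rfl
      have e2 : Up (c :: d :: s) = pstep c (Up (d :: s)) := rfl
      have e3 : Zp ((c :: d :: s).dropLast) = pstep c (Zp ((d :: s).dropLast)) := rfl
      rw [e1, e2, e3, h, pstep_add]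

lemma rrcfVal_nil : rrcfVal [] = 1 := by
  simp [rrcfVal, rrTail]

lemma rrcfVal_cons (c : ℕ) (t : List ℕ) :
    rrcfVal (c :: t) = 1 - 1 / ((c : ℚ) - 1 + rrcfVal t) := by
  have h : (c : ℚ) - 1 + rrcfVal t = rrTail (c :: t) := by
    simp only [rrcfVal, rrTail]; ring
  rw [h, rrcfVal]

lemma L5z (b : List ℕ) (hb : Ent b) :
    rrcfVal b = ((Zp b).1 : ℚ) / ((Zp b).2 : ℚ) := by
  induction b with
  | nil => simp [rrcfVal_nil, Zp_nil]
  | cons c t ih =>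
    obtain ⟨hc, ht⟩ := ent_cons hb
    obtain ⟨_, _, _, h4, h5, _⟩ := L1 t ht
    have hc2 : (2 : ℤ) ≤ (c : ℤ) := by exact_mod_cast hc
    rw [rrcfVal_cons, ih ht]
    simp only [Zp_cons, pstep]
    have hzd : (0:ℚ) < ((Zp t).2 : ℚ) := by exact_mod_cast lt_of_lt_of_le h4 h5
    have h1 : (0:ℚ) < ((Zp t).1 : ℚ) := by exact_mod_cast h4
    have hc2' : (2:ℚ) ≤ (c:ℚ) := by exact_mod_cast hc2
    have hne : (c:ℚ) * ((Zp t).2:ℚ) - ((Zp t).2:ℚ) + ((Zp t).1:ℚ) ≠ 0 := by nlinarith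
    have hne2 : (c:ℚ) - 1 + ((Zp t).1:ℚ) / ((Zp t).2:ℚ) ≠ 0 := by
      have : (0:ℚ) < ((Zp t).1 : ℚ) / ((Zp t).2 : ℚ) := by positivity
      nlinarith
    push_cast
    field_simp
    have hXt : ((c:ℚ) * ((Zp t).2:ℚ) - ((Zp t).2:ℚ) + ((Zp t).1:ℚ)) *
        ((c:ℚ) * ((Zp t).2:ℚ) - ((Zp t).2:ℚ) + ((Zp t).1:ℚ))⁻¹ = 1 := mul_inv_cancel₀ hne
    linear_combination -hXt


lemma ent_dropLast {b : List ℕ} (hb : Ent b) : Ent b.dropLast :=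
  fun x hx => hb x (List.dropLast_subset b hx)

lemma ent_append2 {b : List ℕ} (hb : Ent b) : Ent (b ++ [2]) := by
  intro x hx
  rcases List.mem_append.1 hx with h | h
  · exact hb x h
  · simp at h; omega

lemma sum_ge_two {b : List ℕ} (hb : Ent b) (hb0 : b ≠ []) : 2 ≤ b.sum := by
  cases b with
  | nil => exact absurd rfl hb0
  | cons c t =>
    have := (ent_cons hb).1
    simp only [List.sum_cons]
    omega

lemma zpos (b : List ℕ) (hb : Ent b) : 0 < rrcfVal b := by
  rw [L5z b hb]
  obtain ⟨_, _, _, h4, h5, _⟩ := L1 b hb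
  have h1 : (0:ℚ) < ((Zp b).1 : ℚ) := by exact_mod_cast h4
  have h2 : (0:ℚ) < ((Zp b).2 : ℚ) := by exact_mod_cast lt_of_lt_of_le h4 h5
  positivity

lemma zle_one (b : List ℕ) (hb : Ent b) : rrcfVal b ≤ 1 := by
  rw [L5z b hb]
  obtain ⟨_, _, _, h4, h5, _⟩ := L1 b hb
  have h2 : (0:ℚ) < ((Zp b).2 : ℚ) := by exact_mod_cast lt_of_lt_of_le h4 h5
  rw [div_le_one h2]
  exact_mod_cast h5

lemma zlt_one (b : List ℕ) (hb : Ent b) (hb0 : b ≠ []) : rrcfVal b < 1 := by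
  rw [L5z b hb]
  obtain ⟨_, _, _, h4, h5, h6⟩ := L1 b hb
  have h2 : (0:ℚ) < ((Zp b).2 : ℚ) := by exact_mod_cast lt_of_lt_of_le h4 h5
  rw [div_lt_one h2]
  exact_mod_cast h6 hb0

lemma lq_nonneg (b : List ℕ) (hb : Ent b) : 0 ≤ lq b := by
  obtain ⟨h1, h2, _, _, _, _⟩ := L1 b hb
  have h1' : (0:ℚ) ≤ ((Up b).1 : ℚ) := by exact_mod_cast h1
  have h2' : (0:ℚ) < ((Up b).2 : ℚ) := by exact_mod_cast h2
  exact div_nonneg h1' h2'.le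

lemma rq_le_one (b : List ℕ) (hb : Ent b) : rq b ≤ 1 :=
  zle_one _ (ent_dropLast hb)

lemma detVU (b : List ℕ) (hb0 : b ≠ []) :
    (Zp b.dropLast).1 * (Up b).2 - (Up b).1 * (Zp b.dropLast).2 = 1 := by
  have h := Zp_eq b hb0
  have h1 : (Zp b).1 = (Up b).1 + (Zp b.dropLast).1 := by rw [h]; rfl
  have h2 : (Zp b).2 = (Up b).2 + (Zp b.dropLast).2 := by rw [h]; rfl
  have hd := detZU b
  linear_combination hd - (Up b).2 * h1 + (Up b).1 * h2

lemma lq_lt_z (b : List ℕ) (hb : Ent b) : lq b < rrcfVal b := by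
  rw [L5z b hb, lq]
  obtain ⟨h1, h2, h3, h4, h5, _⟩ := L1 b hb
  have h2' : (0:ℚ) < ((Up b).2 : ℚ) := by exact_mod_cast h2
  have hzd : (0:ℚ) < ((Zp b).2 : ℚ) := by exact_mod_cast lt_of_lt_of_le h4 h5
  rw [div_lt_div_iff₀ h2' hzd]
  have := detZU b
  have : (Up b).1 * (Zp b).2 < (Zp b).1 * (Up b).2 := by omega
  exact_mod_cast this

lemma z_lt_rq (b : List ℕ) (hb : Ent b) (hb0 : b ≠ []) : rrcfVal b < rq b := by
  rw [L5z b hb, rq, L5z _ (ent_dropLast hb)]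
  obtain ⟨h1, h2, h3, h4, h5, _⟩ := L1 b hb
  obtain ⟨_, _, _, h4', h5', _⟩ := L1 b.dropLast (ent_dropLast hb)
  have hzd : (0:ℚ) < ((Zp b).2 : ℚ) := by exact_mod_cast lt_of_lt_of_le h4 h5
  have hvd : (0:ℚ) < ((Zp b.dropLast).2 : ℚ) := by exact_mod_cast lt_of_lt_of_le h4' h5'
  rw [div_lt_div_iff₀ hzd hvd]
  have hdet := detVU b hb0
  have h := Zp_eq b hb0
  have e1 : (Zp b).1 = (Up b).1 + (Zp b.dropLast).1 := by rw [h]; rfl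
  have e2 : (Zp b).2 = (Up b).2 + (Zp b.dropLast).2 := by rw [h]; rfl
  have : (Zp b).1 * (Zp b.dropLast).2 < (Zp b.dropLast).1 * (Zp b).2 := by nlinarith
  exact_mod_cast this

lemma lq_lt_rq (b : List ℕ) (hb : Ent b) (hb0 : b ≠ []) : lq b < rq b :=
  lt_trans (lq_lt_z b hb) (z_lt_rq b hb hb0)

-- the two children
lemma Up_append2 (b : List ℕ) : Up (b ++ [2]) = Up b := by
  unfold Up
  rw [List.foldr_append]
  norm_num [pstep]

lemma lq_append2 (b : List ℕ) : lq (b ++ [2]) = lq b := by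
  unfold lq; rw [Up_append2]

lemma rq_append2 (b : List ℕ) : rq (b ++ [2]) = rrcfVal b := by
  unfold rq
  rw [List.dropLast_concat]

lemma Zp_append2 (b : List ℕ) : Zp (b ++ [2]) = Up b + Zp b := by
  have h := Zp_eq (b ++ [2]) (by simp)
  rw [h, Up_append2, List.dropLast_concat]

-- right child: b = i ++ [g], bp = i ++ [g+1]
lemma Up_concat_succ (i : List ℕ) (g : ℕ) : Up (i ++ [g + 1]) = Zp (i ++ [g]) := by
  unfold Up Zp
  rw [List.foldr_append, List.foldr_append]
  have : List.foldr pstep (0,1) [g+1] = List.foldr pstep (1,1) [g] := by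
    simp only [List.foldr_cons, List.foldr_nil, pstep, Prod.mk.injEq]
    push_cast
    exact ⟨by ring, by ring⟩
  rw [this]

lemma dropLast_concat' (i : List ℕ) (g : ℕ) : (i ++ [g]).dropLast = i :=
  List.dropLast_concat


lemma lq_concat_succ (i : List ℕ) (g : ℕ) (h : Ent (i ++ [g])) :
    lq (i ++ [g + 1]) = rrcfVal (i ++ [g]) := by
  rw [lq, Up_concat_succ, L5z _ h]

lemma rq_concat_succ (i : List ℕ) (g : ℕ) : rq (i ++ [g + 1]) = rq (i ++ [g]) := by
  unfold rq
  rw [dropLast_concat', dropLast_concat']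

lemma Zp_concat_succ (i : List ℕ) (g : ℕ) (hg : Ent (i ++ [g])) :
    (Zp (i ++ [g])).2 + 1 ≤ (Zp (i ++ [g + 1])).2 := by
  have h := Zp_eq (i ++ [g + 1]) (by simp)
  have e2 : (Zp (i ++ [g+1])).2 = (Up (i ++ [g+1])).2 + (Zp (i ++ [g+1]).dropLast).2 := by
    rw [h]; rfl
  rw [e2, Up_concat_succ, dropLast_concat']
  obtain ⟨_, _, _, h4, h5, _⟩ := L1 i (fun x hx => hg x (List.mem_append_left _ hx))
  omega

lemma Zp2_append2 (b : List ℕ) (hb : Ent b) : (Zp b).2 + 1 ≤ (Zp (b ++ [2])).2 := by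
  have h := Zp_append2 b
  have e2 : (Zp (b ++ [2])).2 = (Up b).2 + (Zp b).2 := by rw [h]; rfl
  obtain ⟨_, h2, _, _, _, _⟩ := L1 b hb
  omega

-- parent representation for lq
lemma lq_cons (c : ℕ) (t : List ℕ) (hc : 2 ≤ c) (ht : Ent t) :
    lq (c :: t) = 1 - 1 / ((c : ℚ) - 1 + lq t) := by
  obtain ⟨h1, h2, h3, _, _, _⟩ := L1 t ht
  have hc2 : (2:ℚ) ≤ (c:ℚ) := by exact_mod_cast hc
  have h1' : (0:ℚ) ≤ ((Up t).1 : ℚ) := by exact_mod_cast h1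
  have h2' : (0:ℚ) < ((Up t).2 : ℚ) := by exact_mod_cast h2
  rw [lq, lq, Up_cons]
  simp only [pstep]
  have hne : (c:ℚ) * ((Up t).2:ℚ) - ((Up t).2:ℚ) + ((Up t).1:ℚ) ≠ 0 := by nlinarith
  push_cast
  field_simp
  have hXt : ((c:ℚ) * ((Up t).2:ℚ) - ((Up t).2:ℚ) + ((Up t).1:ℚ)) *
      ((c:ℚ) * ((Up t).2:ℚ) - ((Up t).2:ℚ) + ((Up t).1:ℚ))⁻¹ = 1 := mul_inv_cancel₀ hne
  linear_combination hXt

lemma lq_parent (b : List ℕ) (hb : Ent b) (hb0 : b ≠ []) :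
    lq b = 0 ∨ ∃ b', Ent b' ∧ b' ≠ [] ∧ lq b = rrcfVal b' ∧ b'.sum + 1 ≤ b.sum := by
  induction b with
  | nil => exact absurd rfl hb0
  | cons c t ih =>
    obtain ⟨hc, ht⟩ := ent_cons hb
    have hc2 : (2:ℚ) ≤ (c:ℚ) := by exact_mod_cast hc
    cases t with
    | nil =>
      rcases Nat.lt_or_ge c 3 with h3 | h3
      · left
        have : c = 2 := by omega
        subst this
        simp [lq, Up, pstep, List.foldr]
      · right
        refine ⟨[c - 1], by intro x hx; simp at hx; omega, by simp, ?_, by simp; omega⟩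
        have e : ((c - 1 : ℕ) : ℚ) = (c : ℚ) - 1 := by
          have : (1:ℕ) ≤ c := by omega
          push_cast [this]; ring
        rw [lq_cons c [] hc (by intro x hx; simp at hx),
          show lq [] = 0 from by simp [lq, Up, List.foldr], rrcfVal_cons, rrcfVal_nil, e]
        ring_nf
    | cons d s =>
      rcases ih ht (by simp) with h0 | ⟨b', hb', hb'0, hval, hsum⟩
      · rcases Nat.lt_or_ge c 3 with h3 | h3
        · left
          have : c = 2 := by omega
          subst this
          rw [lq_cons 2 (d :: s) (by norm_num) ht, h0]
          norm_num
        · right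
          refine ⟨[c - 1], by intro x hx; simp at hx; omega, by simp, ?_, ?_⟩
          · have e : ((c - 1 : ℕ) : ℚ) = (c : ℚ) - 1 := by
              have : (1:ℕ) ≤ c := by omega
              push_cast [this]; ring
            rw [lq_cons c (d :: s) hc ht, h0, rrcfVal_cons, rrcfVal_nil, e]
            norm_num
          · have : 2 ≤ (d :: s).sum := sum_ge_two ht (by simp)
            simp only [List.sum_cons, List.sum_nil]
            omega
      · right
        refine ⟨c :: b', fun x hx => ?_, by simp, ?_, ?_⟩
        · rcases List.mem_cons.1 hx with rfl | hx
          · exact hc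
          · exact hb' x hx
        · rw [lq_cons c (d :: s) hc ht, hval, rrcfVal_cons]
        · simp only [List.sum_cons] at hsum ⊢
          omega

lemma rq_parent (b : List ℕ) (hb : Ent b) (hb0 : b ≠ []) :
    rq b = 1 ∨ ∃ b', Ent b' ∧ b' ≠ [] ∧ rq b = rrcfVal b' ∧ b'.sum + 2 ≤ b.sum := by
  rcases eq_or_ne b.dropLast [] with h | h
  · left; rw [rq, h, rrcfVal_nil]
  · right
    refine ⟨b.dropLast, ent_dropLast hb, h, rfl, ?_⟩
    have hL := List.dropLast_append_getLast hb0
    have hg : 2 ≤ b.getLast hb0 := hb _ (List.getLast_mem hb0)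
    have : b.sum = b.dropLast.sum + b.getLast hb0 := by
      conv_lhs => rw [← hL]
      rw [List.sum_append]
      simp
    omega


lemma rrcf_unique : ∀ b : List ℕ, Ent b → b ≠ [] → ∀ c : List ℕ, Ent c → c ≠ [] →
    rrcfVal b = rrcfVal c → b = c := by
  intro b
  induction b with
  | nil => intro _ hb0; exact absurd rfl hb0
  | cons b1 t ih =>
    intro hb _ c hc hc0 heq
    cases c with
    | nil => exact absurd rfl hc0
    | cons c1 s =>
      obtain ⟨hb1, ht⟩ := ent_cons hb
      obtain ⟨hc1, hs⟩ := ent_cons hc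
      have hT1 : 0 < rrcfVal t := zpos t ht
      have hT2 : rrcfVal t ≤ 1 := zle_one t ht
      have hS1 : 0 < rrcfVal s := zpos s hs
      have hS2 : rrcfVal s ≤ 1 := zle_one s hs
      have hb1' : (2:ℚ) ≤ (b1:ℚ) := by exact_mod_cast hb1
      have hc1' : (2:ℚ) ≤ (c1:ℚ) := by exact_mod_cast hc1
      have hx : (0:ℚ) < (b1:ℚ) - 1 + rrcfVal t := by linarith
      have hy : (0:ℚ) < (c1:ℚ) - 1 + rrcfVal s := by linarith
      rw [rrcfVal_cons, rrcfVal_cons] at heq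
      have h2 : 1/((b1:ℚ) - 1 + rrcfVal t) = 1/((c1:ℚ) - 1 + rrcfVal s) := by linarith
      rw [div_eq_div_iff hx.ne' hy.ne'] at h2
      have h3 : (b1:ℚ) - 1 + rrcfVal t = (c1:ℚ) - 1 + rrcfVal s := by linarith
      have hbc : b1 = c1 := by
        rcases Nat.lt_trichotomy b1 c1 with h | h | h
        · exfalso
          have : (b1:ℚ) + 1 ≤ (c1:ℚ) := by exact_mod_cast Nat.succ_le_of_lt h
          linarith
        · exact h
        · exfalso
          have : (c1:ℚ) + 1 ≤ (b1:ℚ) := by exact_mod_cast Nat.succ_le_of_lt h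
          linarith
      subst hbc
      have hTS : rrcfVal t = rrcfVal s := by linarith
      cases t with
      | nil =>
        cases s with
        | nil => rfl
        | cons d u =>
          exfalso
          have := zlt_one (d :: u) hs (by simp)
          rw [← hTS, rrcfVal_nil] at this
          exact lt_irrefl _ this
      | cons e v =>
        cases s with
        | nil =>
          exfalso
          have := zlt_one (e :: v) ht (by simp)
          rw [hTS, rrcfVal_nil] at this
          exact lt_irrefl _ this
        | cons d u =>
          have := ih ht (by simp) (d :: u) hs (by simp) hTS
          rw [this]

lemma den_lb (q : ℚ) (b : List ℕ) (hb : Ent b) (hb0 : b ≠ [])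
    (h1 : lq b < q) (h2 : q < rq b) : (Zp b).2 ≤ (q.den : ℤ) := by
  obtain ⟨g1, g2, g3, g4, g5, _⟩ := L1 b hb
  obtain ⟨_, _, _, g4', g5', _⟩ := L1 b.dropLast (ent_dropLast hb)
  have hud : (0:ℚ) < ((Up b).2 : ℚ) := by exact_mod_cast g2
  have hvd : (0:ℚ) < ((Zp b.dropLast).2 : ℚ) := by exact_mod_cast lt_of_lt_of_le g4' g5'
  have hqd : (0:ℚ) < ((q.den : ℤ) : ℚ) := by exact_mod_cast q.pos
  have hq : q = ((q.num : ℚ)) / ((q.den : ℚ)) := (Rat.num_div_den q).symm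
  rw [lq] at h1
  rw [rq, L5z _ (ent_dropLast hb)] at h2
  rw [hq] at h1 h2
  rw [div_lt_div_iff₀ hud (by exact_mod_cast q.pos)] at h1
  rw [div_lt_div_iff₀ (by exact_mod_cast q.pos) hvd] at h2
  have h1' : (Up b).1 * (q.den : ℤ) < q.num * (Up b).2 := by exact_mod_cast h1
  have h2' : q.num * (Zp b.dropLast).2 < (Zp b.dropLast).1 * (q.den : ℤ) := by exact_mod_cast h2
  have hdet := detVU b hb0
  have hZ := Zp_eq b hb0
  have e2 : (Zp b).2 = (Up b).2 + (Zp b.dropLast).2 := by rw [hZ]; rfl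
  have key : ((q.den : ℤ)) = (Up b).2 * ((Zp b.dropLast).1 * (q.den : ℤ) - q.num * (Zp b.dropLast).2)
      + (Zp b.dropLast).2 * (q.num * (Up b).2 - (Up b).1 * (q.den : ℤ)) := by
    linear_combination -(q.den : ℤ) * hdet
  nlinarith

lemma key_lemma (c : List ℕ) (hc : Ent c) (hc0 : c ≠ []) :
    ∀ N : ℕ, ∀ b : List ℕ, Ent b → b ≠ [] →
      lq b < rrcfVal c → rrcfVal c < rq b → ((rrcfVal c).den : ℤ) ≤ (Zp b).2 + N →
      c = b ∨ b.sum < c.sum := by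
  intro N
  induction N with
  | zero =>
    intro b hb hb0 h1 h2 hden
    rcases lt_trichotomy (rrcfVal c) (rrcfVal b) with hlt | heq | hgt
    · exfalso
      have hlb : lq (b ++ [2]) < rrcfVal c := by rw [lq_append2]; exact h1
      have hrb : rrcfVal c < rq (b ++ [2]) := by rw [rq_append2]; exact hlt
      have := den_lb (rrcfVal c) (b ++ [2]) (ent_append2 hb) (by simp) hlb hrb
      have := Zp2_append2 b hb
      omega
    · left; exact rrcf_unique c hc hc0 b hb hb0 heq
    · exfalso
      have hL := List.dropLast_append_getLast hb0
      set i := b.dropLast with hi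
      set g := b.getLast hb0 with hg
      have hEnt : Ent (i ++ [g]) := by rw [hL]; exact hb
      have hgb : 2 ≤ g := hb _ (List.getLast_mem hb0)
      have hEnt' : Ent (i ++ [g + 1]) := by
        intro x hx
        rcases List.mem_append.1 hx with h | h
        · exact hEnt x (List.mem_append_left _ h)
        · simp at h; omega
      have hlb : lq (i ++ [g + 1]) < rrcfVal c := by
        rw [lq_concat_succ i g hEnt, hL]; exact hgt
      have hrb : rrcfVal c < rq (i ++ [g + 1]) := by
        rw [rq_concat_succ, hL]; exact h2
      have := den_lb (rrcfVal c) (i ++ [g + 1]) hEnt' (by simp) hlb hrb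
      have h3 := Zp_concat_succ i g hEnt
      rw [hL] at h3
      omega
  | succ N ihN =>
    intro b hb hb0 h1 h2 hden
    rcases lt_trichotomy (rrcfVal c) (rrcfVal b) with hlt | heq | hgt
    · have hlb : lq (b ++ [2]) < rrcfVal c := by rw [lq_append2]; exact h1
      have hrb : rrcfVal c < rq (b ++ [2]) := by rw [rq_append2]; exact hlt
      have hz := Zp2_append2 b hb
      have hres := ihN (b ++ [2]) (ent_append2 hb) (by simp) hlb hrb (by omega)
      right
      rcases hres with rfl | hsum
      · simp [List.sum_append]
      · simp only [List.sum_append, List.sum_cons, List.sum_nil] at hsum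
        omega
    · left; exact rrcf_unique c hc hc0 b hb hb0 heq
    · have hL := List.dropLast_append_getLast hb0
      set i := b.dropLast with hi
      set g := b.getLast hb0 with hg
      have hEnt : Ent (i ++ [g]) := by rw [hL]; exact hb
      have hgb : 2 ≤ g := hb _ (List.getLast_mem hb0)
      have hEnt' : Ent (i ++ [g + 1]) := by
        intro x hx
        rcases List.mem_append.1 hx with h | h
        · exact hEnt x (List.mem_append_left _ h)
        · simp at h; omega
      have hlb : lq (i ++ [g + 1]) < rrcfVal c := by
        rw [lq_concat_succ i g hEnt, hL]; exact hgt
      have hrb : rrcfVal c < rq (i ++ [g + 1]) := by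
        rw [rq_concat_succ, hL]; exact h2
      have h3 := Zp_concat_succ i g hEnt
      rw [hL] at h3
      have hres := ihN (i ++ [g + 1]) hEnt' (by simp) hlb hrb (by omega)
      right
      have hsumb : b.sum = i.sum + g := by
        conv_lhs => rw [← hL]
        rw [List.sum_append]; simp
      rcases hres with rfl | hsum
      · simp only [List.sum_append, List.sum_cons, List.sum_nil] at *
        omega
      · simp only [List.sum_append, List.sum_cons, List.sum_nil] at hsum
        omega


lemma mem_Xi {m : ℕ} {w : ℚ} :
    w ∈ Xi m ↔ w = 0 ∨ w = 1 ∨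
      ∃ c : List ℕ, Ent c ∧ c ≠ [] ∧ c.sum ≤ m + 1 ∧ w = rrcfVal c := by
  constructor
  · intro hw
    rcases hw with hw | hw
    · rcases hw with hw | hw
      · exact Or.inl hw
      · exact Or.inr (Or.inl hw)
    · right; right
      simp only [Set.mem_iUnion] at hw
      obtain ⟨k, hk, hmem⟩ := hw
      simp only [Finset.mem_Icc] at hk
      obtain ⟨hIoo, c, ⟨hent, hval⟩, hsum⟩ := hmem
      refine ⟨c, hent, ?_, by omega, hval⟩
      intro h
      rw [h, rrcfVal_nil] at hval
      exact lt_irrefl _ (hval ▸ hIoo.2)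
  · intro hw
    rcases hw with rfl | rfl | ⟨c, hent, hc0, hsum, rfl⟩
    · exact Or.inl (Or.inl rfl)
    · exact Or.inl (Or.inr rfl)
    · right
      have h2 : 2 ≤ c.sum := sum_ge_two hent hc0
      simp only [Set.mem_iUnion]
      refine ⟨c.sum - 1, by simp only [Finset.mem_Icc]; omega, ?_⟩
      refine ⟨⟨zpos c hent, zlt_one c hent hc0⟩, c, ⟨hent, rfl⟩, by omega⟩

lemma Xi_mono {n m : ℕ} (h : n ≤ m) : Xi n ⊆ Xi m := by
  intro w hw
  rcases mem_Xi.1 hw with h1 | h1 | ⟨c, h1, h2, h3, h4⟩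
  · exact mem_Xi.2 (Or.inl h1)
  · exact mem_Xi.2 (Or.inr (Or.inl h1))
  · exact mem_Xi.2 (Or.inr (Or.inr ⟨c, h1, h2, by omega, h4⟩))

lemma Xi_nonneg {n : ℕ} {w : ℚ} (hw : w ∈ Xi n) : 0 ≤ w ∧ w ≤ 1 := by
  rcases mem_Xi.1 hw with rfl | rfl | ⟨c, h1, h2, _, rfl⟩
  · norm_num
  · norm_num
  · exact ⟨(zpos c h1).le, zle_one c h1⟩

lemma Theta_finite (k : ℕ) : (Theta k).Finite := by
  have : Theta k ⊆ (fun comp : Composition (k + 1) => rrcfVal comp.blocks) '' Set.univ := by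
    intro w hw
    obtain ⟨_, c, ⟨hent, hval⟩, hsum⟩ := hw
    refine ⟨⟨c, fun hi => by have := hent _ hi; omega, hsum⟩, Set.mem_univ _, hval.symm⟩
  exact Set.Finite.subset (Set.toFinite _) this

lemma Xi_finite (m : ℕ) : (Xi m).Finite := by
  refine Set.Finite.union (by simp) ?_
  exact Set.Finite.biUnion (Finset.finite_toSet _) (fun k _ => Theta_finite k)


lemma num_den_div {a b : ℤ} (hb : 0 < b) (s t : ℤ) (hst : s * a + t * b = 1) :
    ((a : ℚ) / (b : ℚ)).num = a ∧ (((a : ℚ) / (b : ℚ)).den : ℤ) = b := by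
  have hco : Nat.Coprime a.natAbs b.natAbs := by
    have h1 : IsCoprime a b := ⟨s, t, by linarith⟩
    rwa [Int.isCoprime_iff_gcd_eq_one] at h1
  exact ⟨Rat.num_div_eq_of_coprime hb hco, Rat.den_div_eq_of_coprime hb hco⟩

lemma mediant_between (x y : ℚ) (h : x < y) : x < mediant x y ∧ mediant x y < y := by
  have hdx : (0:ℚ) < (x.den : ℚ) := by exact_mod_cast x.pos
  have hdy : (0:ℚ) < (y.den : ℚ) := by exact_mod_cast y.pos
  have hnum : (x.num : ℚ) * (y.den : ℚ) < (y.num : ℚ) * (x.den : ℚ) := by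
    have hx := Rat.num_div_den x
    have hy := Rat.num_div_den y
    rw [← hx, ← hy, div_lt_div_iff₀ hdx hdy] at h
    exact h
  have hd : (0:ℚ) < ((x.den + y.den : ℕ) : ℚ) := by positivity
  constructor
  · rw [mediant]
    conv_lhs => rw [← Rat.num_div_den x]
    rw [div_lt_div_iff₀ hdx hd]
    push_cast
    nlinarith
  · rw [mediant]
    conv_rhs => rw [← Rat.num_div_den y]
    rw [div_lt_div_iff₀ hd hdy]
    push_cast
    nlinarith

lemma mediant_parents (b : List ℕ) (hb : Ent b) (hb0 : b ≠ []) :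
    mediant (lq b) (rq b) = rrcfVal b := by
  obtain ⟨g1, g2, g3, g4, g5, _⟩ := L1 b hb
  obtain ⟨_, _, _, g4', g5', _⟩ := L1 b.dropLast (ent_dropLast hb)
  have hdetZU := detZU b
  have hdetVU := detVU b hb0
  have hU := num_den_div (a := (Up b).1) (b := (Up b).2) (by omega) (-(Zp b).2) ((Zp b).1)
    (by linarith [hdetZU])
  have hV := num_den_div (a := (Zp b.dropLast).1) (b := (Zp b.dropLast).2) (by omega)
    ((Up b).2) (-(Up b).1) (by linarith [hdetVU])
  have hZ := Zp_eq b hb0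
  have e1 : (Zp b).1 = (Up b).1 + (Zp b.dropLast).1 := by rw [hZ]; rfl
  have e2 : (Zp b).2 = (Up b).2 + (Zp b.dropLast).2 := by rw [hZ]; rfl
  have hlq : lq b = ((Up b).1 : ℚ) / ((Up b).2 : ℚ) := rfl
  have hrq : rq b = ((Zp b.dropLast).1 : ℚ) / ((Zp b.dropLast).2 : ℚ) :=
    L5z _ (ent_dropLast hb)
  rw [mediant, L5z b hb, hlq, hrq, hU.1, hV.1]
  have hd1 : (((((Up b).1 : ℚ) / ((Up b).2 : ℚ)).den : ℚ)) = ((Up b).2 : ℚ) := by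
    exact_mod_cast hU.2
  have hd2 : ((((Zp b.dropLast).1 : ℚ) / ((Zp b.dropLast).2 : ℚ)).den : ℚ)
      = ((Zp b.dropLast).2 : ℚ) := by
    exact_mod_cast hV.2
  have hden : (((((Up b).1 : ℚ) / ((Up b).2 : ℚ)).den
      + (((Zp b.dropLast).1 : ℚ) / ((Zp b.dropLast).2 : ℚ)).den : ℕ) : ℚ)
      = ((Up b).2 : ℚ) + ((Zp b.dropLast).2 : ℚ) := by
    push_cast
    rw [hd1, hd2]
  rw [hden, e1, e2]
  push_cast
  ring

def SS (b : List ℕ) (m : ℕ) : Set ℚ := {w ∈ Xi m | lq b < w ∧ w < rq b}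

lemma mem_SS {b : List ℕ} {m : ℕ} {w : ℚ} :
    w ∈ SS b m ↔ w ∈ Xi m ∧ lq b < w ∧ w < rq b := Iff.rfl

lemma SS_finite (b : List ℕ) (m : ℕ) : (SS b m).Finite :=
  (Xi_finite m).subset (fun w hw => hw.1)

lemma SS_empty (b : List ℕ) (hb : Ent b) (hb0 : b ≠ []) (m : ℕ) (h : m + 2 ≤ b.sum) :
    SS b m = ∅ := by
  ext w
  simp only [Set.mem_empty_iff_false, iff_false]
  rintro ⟨hXi, h1, h2⟩
  rcases mem_Xi.1 hXi with rfl | rfl | ⟨c, hc, hc0, hcs, rfl⟩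
  · exact absurd h1 (not_lt.2 (lq_nonneg b hb))
  · exact absurd h2 (not_lt.2 (rq_le_one b hb))
  · obtain ⟨_, _, _, g4, g5, _⟩ := L1 b hb
    have hden : ((rrcfVal c).den : ℤ) ≤ (Zp b).2 + ((rrcfVal c).den : ℤ) := by omega
    have hNd : ((rrcfVal c).den : ℤ) ≤ (Zp b).2 + ((rrcfVal c).den : ℕ) := by
      exact_mod_cast hden
    rcases key_lemma c hc hc0 (rrcfVal c).den b hb hb0 h1 h2 hNd with rfl | hs
    · omega
    · omega


lemma SS_split (b : List ℕ) (hb : Ent b) (hb0 : b ≠ []) (m : ℕ)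
    (hmem : rrcfVal b ∈ Xi m) :
    SS b m = insert (rrcfVal b)
      (SS (b ++ [2]) m ∪ SS (b.dropLast ++ [b.getLast hb0 + 1]) m) := by
  have hL := List.dropLast_append_getLast hb0
  set i := b.dropLast with hi
  set g := b.getLast hb0 with hg
  have hEnt : Ent (i ++ [g]) := by rw [hL]; exact hb
  have hlq_bp : lq (i ++ [g + 1]) = rrcfVal b := by rw [lq_concat_succ i g hEnt, hL]
  have hrq_bp : rq (i ++ [g + 1]) = rq b := by rw [rq_concat_succ, hL]
  ext w
  simp only [mem_SS, Set.mem_insert_iff, Set.mem_union]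
  constructor
  · rintro ⟨hw, h1, h2⟩
    rcases lt_trichotomy w (rrcfVal b) with h | h | h
    · right; left
      exact ⟨hw, by rwa [lq_append2], by rwa [rq_append2]⟩
    · left; exact h
    · right; right
      exact ⟨hw, by rwa [hlq_bp], by rwa [hrq_bp]⟩
  · rintro (rfl | ⟨hw, h1, h2⟩ | ⟨hw, h1, h2⟩)
    · exact ⟨hmem, lq_lt_z b hb, z_lt_rq b hb hb0⟩
    · rw [lq_append2] at h1
      rw [rq_append2] at h2
      exact ⟨hw, h1, lt_trans h2 (z_lt_rq b hb hb0)⟩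
    · rw [hlq_bp] at h1
      rw [hrq_bp] at h2
      exact ⟨hw, lt_trans (lq_lt_z b hb) h1, h2⟩

lemma CNT : ∀ d : ℕ, ∀ b : List ℕ, Ent b → b ≠ [] → ∀ m : ℕ, m + 1 = b.sum + d →
    (SS b m).ncard = Nat.fib (d + 3) - 1 := by
  intro d
  induction d using Nat.strong_induction_on with
  | _ d ih =>
    intro b hb hb0 m hm
    have hL := List.dropLast_append_getLast hb0
    set i := b.dropLast with hi
    set g := b.getLast hb0 with hg
    have hEnt : Ent (i ++ [g]) := by rw [hL]; exact hb
    have hgb : 2 ≤ g := hb _ (List.getLast_mem hb0)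
    have hEnt' : Ent (i ++ [g + 1]) := by
      intro x hx
      rcases List.mem_append.1 hx with h | h
      · exact hEnt x (List.mem_append_left _ h)
      · simp at h; omega
    have hsumb : b.sum = i.sum + g := by
      conv_lhs => rw [← hL]
      rw [List.sum_append]; simp
    have hsum_bp : (i ++ [g + 1]).sum = b.sum + 1 := by
      rw [List.sum_append]; simp; omega
    have hsum_b2 : (b ++ [2]).sum = b.sum + 2 := by
      rw [List.sum_append]; simp
    have hsum2 : 2 ≤ b.sum := sum_ge_two hb hb0
    have hmem : rrcfVal b ∈ Xi m :=
      mem_Xi.2 (Or.inr (Or.inr ⟨b, hb, hb0, by omega, rfl⟩))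
    have hsplit := SS_split b hb hb0 m hmem
    have hlq_bp : lq (i ++ [g + 1]) = rrcfVal b := by rw [lq_concat_succ i g hEnt, hL]
    have hrq_b2 : rq (b ++ [2]) = rrcfVal b := rq_append2 b
    have hnotin : rrcfVal b ∉ SS (b ++ [2]) m ∪ SS (i ++ [g + 1]) m := by
      rintro (⟨_, _, h2⟩ | ⟨_, h1, _⟩)
      · rw [hrq_b2] at h2; exact lt_irrefl _ h2
      · rw [hlq_bp] at h1; exact lt_irrefl _ h1
    have hdisj : Disjoint (SS (b ++ [2]) m) (SS (i ++ [g + 1]) m) := by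
      rw [Set.disjoint_left]
      rintro w ⟨_, _, h2⟩ ⟨_, h1, _⟩
      rw [hrq_b2] at h2
      rw [hlq_bp] at h1
      exact lt_irrefl _ (lt_trans h1 h2)
    rw [hsplit, Set.ncard_insert_of_notMem hnotin
      ((SS_finite _ m).union (SS_finite _ m)),
      Set.ncard_union_eq hdisj (SS_finite _ m) (SS_finite _ m)]
    match d, hm with
    | 0, hm =>
      rw [SS_empty (b ++ [2]) (ent_append2 hb) (by simp) m (by omega),
        SS_empty (i ++ [g + 1]) hEnt' (by simp) m (by omega)]
      simp only [Set.ncard_empty]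
      decide
    | 1, hm =>
      rw [SS_empty (b ++ [2]) (ent_append2 hb) (by simp) m (by omega),
        ih 0 (by omega) (i ++ [g + 1]) hEnt' (by simp) m (by omega)]
      simp only [Set.ncard_empty]
      decide
    | (e + 2), hm =>
      rw [ih e (by omega) (b ++ [2]) (ent_append2 hb) (by simp) m (by omega),
        ih (e + 1) (by omega) (i ++ [g + 1]) hEnt' (by simp) m (by omega)]
      have f1 : Nat.fib (e + 3) + Nat.fib (e + 4) = Nat.fib (e + 5) := (Nat.fib_add_two).symm
      have f2 : 1 ≤ Nat.fib (e + 3) := Nat.fib_pos.2 (by omega)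
      have f3 : 1 ≤ Nat.fib (e + 4) := Nat.fib_pos.2 (by omega)
      have h14 : e + 1 + 3 = e + 4 := by omega
      have h15 : e + 2 + 3 = e + 5 := by omega
      rw [h14, h15]
      omega


/-- if `x < y` are consecutive in `Ξ_n` and `x ⊕ y ∈ Θ_k`, then
for every `m ≥ k`, `#{ξ ∈ Ξ_m : x < ξ ≤ y} = F_{m-k+3}`. -/
theorem ncard_between_consecutive
    (n : ℕ) (hn : 1 ≤ n) (x y : ℚ) (hxy : IsConsecutive (Xi n) x y)
    (k : ℕ) (hk : mediant x y ∈ Theta k) :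
    ∀ m : ℕ, k ≤ m →
      ({ξ ∈ Xi m | x < ξ ∧ ξ ≤ y}).ncard = Nat.fib (m - k + 3) := by

  classical
  obtain ⟨hx, hy, hlt, hcons⟩ := hxy
  obtain ⟨hq01, c0, ⟨hc0ent, hc0val⟩, hc0sum⟩ := hk
  have hc0ent' : Ent c0 := hc0ent
  obtain ⟨hqx, hqy⟩ := mediant_between x y hlt
  have hy1 : y ≤ 1 := (Xi_nonneg hy).2
  have hx0 : 0 ≤ x := (Xi_nonneg hx).1
  have hc00 : c0 ≠ [] := by
    rintro rfl
    rw [rrcfVal_nil] at hc0val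
    rw [hc0val] at hqy
    linarith
  have hPex : ∃ s : ℕ, ∃ c, Ent c ∧ c ≠ [] ∧ c.sum = s ∧ x < rrcfVal c ∧ rrcfVal c < y :=
    ⟨c0.sum, c0, hc0ent', hc00, rfl, hc0val ▸ hqx, hc0val ▸ hqy⟩
  obtain ⟨b, hbent, hb0, hbsum, hbx, hby⟩ := Nat.find_spec hPex
  have hmin : ∀ s < Nat.find hPex,
      ¬ ∃ c, Ent c ∧ c ≠ [] ∧ c.sum = s ∧ x < rrcfVal c ∧ rrcfVal c < y :=
    fun s hs => Nat.find_min hPex hs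
  have hns : n + 2 ≤ b.sum := by
    by_contra hcon
    push_neg at hcon
    have hmem : rrcfVal b ∈ Xi n :=
      mem_Xi.2 (Or.inr (Or.inr ⟨b, hbent, hb0, by omega, rfl⟩))
    exact hcons (rrcfVal b) hmem ⟨hbx, hby⟩
  have hxlq : x = lq b := by
    rcases lt_trichotomy x (lq b) with h | h | h
    · exfalso
      rcases lq_parent b hbent hb0 with h0 | ⟨b', hb', hb'0, hval, hsum'⟩
      · rw [h0] at h
        exact absurd h (not_lt.2 hx0)
      · have h1 : x < rrcfVal b' := by rw [← hval]; exact h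
        have h2 : rrcfVal b' < y := by
          rw [← hval]
          exact lt_trans (lq_lt_z b hbent) hby
        exact hmin b'.sum (by omega) ⟨b', hb', hb'0, rfl, h1, h2⟩
    · exact h
    · exfalso
      rcases mem_Xi.1 hx with rfl | rfl | ⟨c, hc, hc0', hcs, rfl⟩
      · exact absurd h (not_lt.2 (lq_nonneg b hbent))
      · linarith
      · have h2 : rrcfVal c < rq b := lt_trans hbx (z_lt_rq b hbent hb0)
        obtain ⟨_, _, _, g4, g5, _⟩ := L1 b hbent
        have hNd : ((rrcfVal c).den : ℤ) ≤ (Zp b).2 + ((rrcfVal c).den : ℕ) := by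
          have : (0:ℤ) ≤ (Zp b).2 := by omega
          push_cast
          omega
        rcases key_lemma c hc hc0' (rrcfVal c).den b hbent hb0 h h2 hNd with rfl | hs
        · omega
        · omega
  have hyrq : y = rq b := by
    rcases lt_trichotomy y (rq b) with h | h | h
    · exfalso
      rcases mem_Xi.1 hy with rfl | rfl | ⟨c, hc, hc0', hcs, rfl⟩
      · linarith
      · exact absurd h (not_lt.2 (rq_le_one b hbent))
      · have h1 : lq b < rrcfVal c := by rw [← hxlq]; exact hlt
        obtain ⟨_, _, _, g4, g5, _⟩ := L1 b hbent
        have hNd : ((rrcfVal c).den : ℤ) ≤ (Zp b).2 + ((rrcfVal c).den : ℕ) := by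
          have : (0:ℤ) ≤ (Zp b).2 := by omega
          push_cast
          omega
        rcases key_lemma c hc hc0' (rrcfVal c).den b hbent hb0 h1 h hNd with rfl | hs
        · omega
        · omega
    · exact h
    · exfalso
      rcases rq_parent b hbent hb0 with h0 | ⟨b', hb', hb'0, hval, hsum'⟩
      · rw [h0] at h
        linarith
      · have h1 : x < rrcfVal b' := by
          rw [← hval, hxlq]
          exact lq_lt_rq b hbent hb0
        have h2 : rrcfVal b' < y := by rw [← hval]; exact h
        exact hmin b'.sum (by omega) ⟨b', hb', hb'0, rfl, h1, h2⟩
  have hqz : mediant x y = rrcfVal b := by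
    rw [hxlq, hyrq]
    exact mediant_parents b hbent hb0
  have hbk : b.sum = k + 1 := by
    have heq : c0 = b := rrcf_unique c0 hc0ent' hc00 b hbent hb0 (by rw [← hc0val, hqz])
    rw [← hc0sum, heq]
  intro m hm
  have hym : y ∈ Xi m := Xi_mono (show n ≤ m by omega) hy
  have hset : {ξ ∈ Xi m | x < ξ ∧ ξ ≤ y} = insert y (SS b m) := by
    ext w
    simp only [Set.mem_setOf_eq, Set.mem_insert_iff, mem_SS]
    constructor
    · rintro ⟨hw, h1, h2⟩
      rcases h2.lt_or_eq with h2 | rfl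
      · right
        exact ⟨hw, by rw [← hxlq]; exact h1, by rw [← hyrq]; exact h2⟩
      · left; rfl
    · rintro (rfl | ⟨hw, h1, h2⟩)
      · exact ⟨hym, hlt, le_refl _⟩
      · refine ⟨hw, by rw [hxlq]; exact h1, le_of_lt ?_⟩
        rw [hyrq]
        exact h2
  have hynot : y ∉ SS b m := by
    rintro ⟨_, _, h2⟩
    rw [← hyrq] at h2
    exact lt_irrefl _ h2
  rw [hset, Set.ncard_insert_of_notMem hynot (SS_finite b m),
    CNT (m - k) b hbent hb0 m (by omega)]
  have hwf : 1 ≤ Nat.fib (m - k + 3) := Nat.fib_pos.2 (by omega)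
  omega
end
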